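/- arXiv:0812.5093 — 6 statements merged into one kernel-verified Lean document; each statement's English description precedes it below -/
import Mathlib

section
/- Let i ≥ 1 and j ≥ 0 be integers, and suppose there exist constants C > 0 and A > 0 such that |Σ_{n ≤ t} τ(n)^i − C·t·(log t)^{2^i − 1}| ≤ A·t·(log t)^{2^i − 2} for all real t ≥ 3. Then there exists a constant B > 0, depending only on i, j, C and A, such that for all real x ≥ 3 one has |Σ_{n ≤ x} τ(n)^i (log n)^j n^{−1/2} − 2C·√x·(log x)^{2^i + j − 1}| ≤ B·√x·(log x)^{2^i + j − 2}. -/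
open Real MeasureTheory Finset intervalIntegral

/- ### derivative lemmas -/
lemma aux_hasDeriv_f (j : ℕ) {t : ℝ} (ht : 0 < t) :
    HasDerivAt (fun t => Real.log t ^ j / Real.sqrt t)
      (((j : ℝ) * Real.log t ^ (j - 1) - Real.log t ^ j / 2) / (t * Real.sqrt t)) t := by
  have hst : Real.sqrt t ≠ 0 := (Real.sqrt_pos.mpr ht).ne'
  have h1 : HasDerivAt (fun t => Real.log t ^ j) ((j : ℝ) * Real.log t ^ (j - 1) * t⁻¹) t :=
    (Real.hasDerivAt_log ht.ne').pow j
  have h2 := Real.hasDerivAt_sqrt ht.ne'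
  have := h1.div h2 hst
  convert! this using 1
  rw [Real.sq_sqrt ht.le]
  have h4 : Real.sqrt t ^ 3 = t * Real.sqrt t := by
    rw [pow_succ, Real.sq_sqrt ht.le]
  field_simp
  ring_nf
  rw [Real.sq_sqrt ht.le]

lemma aux_hasDeriv_F (m : ℕ) {t : ℝ} (ht : 0 < t) :
    HasDerivAt (fun t => 2 * Real.sqrt t * Real.log t ^ m)
      ((Real.log t ^ m + 2 * (m : ℝ) * Real.log t ^ (m - 1)) / Real.sqrt t) t := by
  have hst : Real.sqrt t ≠ 0 := (Real.sqrt_pos.mpr ht).ne'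
  have h1 : HasDerivAt (fun t => Real.log t ^ m) ((m : ℝ) * Real.log t ^ (m - 1) * t⁻¹) t :=
    (Real.hasDerivAt_log ht.ne').pow m
  have h2 := (Real.hasDerivAt_sqrt ht.ne').const_mul 2
  have := h2.mul h1
  convert! this using 1
  have h3 : Real.sqrt t * Real.sqrt t = t := Real.mul_self_sqrt ht.le
  have h4 : Real.sqrt t ^ 3 = t * Real.sqrt t := by
    rw [pow_succ, Real.sq_sqrt ht.le]
  field_simp
  ring_nf
  rw [Real.sq_sqrt ht.le]

/- ### continuity -/
lemma aux_contOn (p : ℕ) : ContinuousOn (fun t : ℝ => Real.log t ^ p / Real.sqrt t)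
    {t : ℝ | 0 < t} := by
  apply ContinuousOn.div
  · exact (Real.continuousOn_log.mono (fun t ht => ne_of_gt ht)).pow p
  · exact Real.continuous_sqrt.continuousOn
  · exact fun t ht => (Real.sqrt_pos.mpr ht).ne'

lemma aux_contOn2 (m : ℕ) (a b : ℝ) :
    ContinuousOn (fun t : ℝ => (a * Real.log t ^ m + b * Real.log t ^ (m - 1)) / Real.sqrt t)
    {t : ℝ | 0 < t} := by
  apply ContinuousOn.div
  · exact (continuousOn_const.mul ((Real.continuousOn_log.mono
      (fun t ht => ne_of_gt ht)).pow m)).add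
      (continuousOn_const.mul ((Real.continuousOn_log.mono (fun t ht => ne_of_gt ht)).pow (m-1)))
  · exact Real.continuous_sqrt.continuousOn
  · exact fun t ht => (Real.sqrt_pos.mpr ht).ne'

lemma aux_contOn_phi (j : ℕ) :
    ContinuousOn (fun t : ℝ =>
      ((j : ℝ) * Real.log t ^ (j - 1) - Real.log t ^ j / 2) / (t * Real.sqrt t))
      {t : ℝ | 0 < t} := by
  apply ContinuousOn.div
  · exact (continuousOn_const.mul ((Real.continuousOn_log.mono
      (fun t ht => ne_of_gt ht)).pow (j-1))).sub
      (((Real.continuousOn_log.mono (fun t ht => ne_of_gt ht)).pow j).div_const 2)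
  · exact (continuous_id.mul Real.continuous_sqrt).continuousOn
  · exact fun t ht => by
      have : (0:ℝ) < t * Real.sqrt t := mul_pos ht (Real.sqrt_pos.mpr ht)
      exact this.ne'

lemma aux_sub_pos {x : ℝ} (hx : 3 ≤ x) : Set.uIcc 3 x ⊆ {t : ℝ | 0 < t} := by
  rw [Set.uIcc_of_le hx]
  exact fun t ht => lt_of_lt_of_le (by norm_num) ht.1

lemma aux_intInt (p : ℕ) {x : ℝ} (hx : 3 ≤ x) :
    IntervalIntegrable (fun t : ℝ => Real.log t ^ p / Real.sqrt t) volume 3 x :=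
  ContinuousOn.intervalIntegrable ((aux_contOn p).mono (aux_sub_pos hx))

/- ### the basic integral -/
noncomputable def auxJ (p : ℕ) (x : ℝ) : ℝ := ∫ t in (3:ℝ)..x, Real.log t ^ p / Real.sqrt t

lemma auxJ_rec (m : ℕ) {x : ℝ} (hx : 3 ≤ x) :
    auxJ m x = 2 * Real.sqrt x * Real.log x ^ m - 2 * Real.sqrt 3 * Real.log 3 ^ m
      - 2 * m * auxJ (m - 1) x := by
  have key : ∫ t in (3:ℝ)..x,
      ((Real.log t ^ m + 2 * (m : ℝ) * Real.log t ^ (m - 1)) / Real.sqrt t)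
      = 2 * Real.sqrt x * Real.log x ^ m - 2 * Real.sqrt 3 * Real.log 3 ^ m := by
    apply intervalIntegral.integral_eq_sub_of_hasDerivAt
    · intro t ht
      exact aux_hasDeriv_F m (aux_sub_pos hx ht)
    · apply ContinuousOn.intervalIntegrable
      have := (aux_contOn2 m 1 (2*(m:ℝ))).mono (aux_sub_pos hx)
      simpa using this
  have split : ∫ t in (3:ℝ)..x,
      ((Real.log t ^ m + 2 * (m : ℝ) * Real.log t ^ (m - 1)) / Real.sqrt t)
      = auxJ m x + 2 * m * auxJ (m - 1) x := by
    rw [auxJ, auxJ, ← intervalIntegral.integral_const_mul, ← intervalIntegral.integral_add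
      (aux_intInt m hx) ((aux_intInt (m-1) hx).const_mul _)]
    congr 1; ext t
    field_simp
  linarith [key, split.symm]

lemma auxJ_nonneg (p : ℕ) {x : ℝ} (hx : 3 ≤ x) : 0 ≤ auxJ p x := by
  apply intervalIntegral.integral_nonneg hx
  intro t ht
  have h1 : (1:ℝ) ≤ t := by linarith [ht.1]
  have h2 := Real.log_nonneg h1
  positivity

lemma auxJ_le (p : ℕ) {x : ℝ} (hx : 3 ≤ x) :
    auxJ p x ≤ 2 * Real.sqrt x * Real.log x ^ p := by
  have hlogx : 0 ≤ Real.log x := Real.log_nonneg (by linarith)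
  have hint2 : IntervalIntegrable (fun t : ℝ => Real.log x ^ p / Real.sqrt t) volume 3 x := by
    apply ContinuousOn.intervalIntegrable
    apply ContinuousOn.div continuousOn_const Real.continuous_sqrt.continuousOn
    exact fun t ht => (Real.sqrt_pos.mpr (aux_sub_pos hx ht)).ne'
  have mono : auxJ p x ≤ ∫ t in (3:ℝ)..x, Real.log x ^ p / Real.sqrt t := by
    apply intervalIntegral.integral_mono_on hx (aux_intInt p hx) hint2
    intro t ht
    have h1 : (1:ℝ) ≤ t := by linarith [ht.1]
    have h2 := Real.log_nonneg h1
    gcongr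
    exact ht.2
  have eval : ∫ t in (3:ℝ)..x, Real.log x ^ p / Real.sqrt t
      = Real.log x ^ p * (2 * Real.sqrt x - 2 * Real.sqrt 3) := by
    have h0 : auxJ 0 x = 2 * Real.sqrt x - 2 * Real.sqrt 3 := by
      have := auxJ_rec 0 hx; simpa using this
    rw [← h0, auxJ, ← intervalIntegral.integral_const_mul]
    congr 1; ext t; simp [div_eq_mul_inv]
  have : Real.log x ^ p * (2 * Real.sqrt x - 2 * Real.sqrt 3) ≤ 2 * Real.sqrt x * Real.log x ^ p := by
    nlinarith [Real.sqrt_nonneg 3, pow_nonneg hlogx p]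
  linarith

/- ### the summatory function -/
lemma aux_S_mono (c : ℕ → ℝ) (hc : ∀ n, 0 ≤ c n) :
    Monotone (fun t : ℝ => ∑ k ∈ Icc 0 ⌊t⌋₊, c k) := by
  intro a b hab
  apply Finset.sum_le_sum_of_subset_of_nonneg
  · exact Finset.Icc_subset_Icc le_rfl (Nat.floor_le_floor hab)
  · exact fun k _ _ => hc k

lemma aux_phiS_intOn (j : ℕ) (c : ℕ → ℝ) (hc : ∀ n, 0 ≤ c n) {a b : ℝ} (ha : 0 < a)
    (hab : a ≤ b) :
    IntegrableOn (fun t : ℝ =>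
      (((j : ℝ) * Real.log t ^ (j - 1) - Real.log t ^ j / 2) / (t * Real.sqrt t))
        * ∑ k ∈ Icc 0 ⌊t⌋₊, c k) (Set.Icc a b) := by
  apply IntegrableOn.continuousOn_mul
  · apply (aux_contOn_phi j).mono
    intro t ht
    exact lt_of_lt_of_le ha ht.1
  · exact ((aux_S_mono c hc).monotoneOn _).integrableOn_isCompact isCompact_Icc
  · exact isCompact_Icc

lemma aux_phiS_intInt (j : ℕ) (c : ℕ → ℝ) (hc : ∀ n, 0 ≤ c n) {a b : ℝ} (ha : 0 < a)
    (hab : a ≤ b) :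
    IntervalIntegrable (fun t : ℝ =>
      (((j : ℝ) * Real.log t ^ (j - 1) - Real.log t ^ j / 2) / (t * Real.sqrt t))
        * ∑ k ∈ Icc 0 ⌊t⌋₊, c k) volume a b := by
  rw [intervalIntegrable_iff_integrableOn_Icc_of_le hab]
  exact aux_phiS_intOn j c hc ha hab

lemma aux_log3 : 1 < Real.log 3 := by
  rw [← Real.exp_lt_exp (x := 1), Real.exp_log (by norm_num)]
  linarith [Real.exp_one_lt_d9]

set_option maxHeartbeats 2000000 in
/-- Partial summation for sums of `τ(n)^i (log n)^j / √n`. -/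
theorem stmt_1 (i j : ℕ) (hi : 1 ≤ i) (C A : ℝ) (hC : 0 < C) (hA : 0 < A)
    (h : ∀ t : ℝ, 3 ≤ t →
      |(∑ n ∈ Finset.Icc 1 ⌊t⌋₊, ((n.divisors.card : ℝ)) ^ i)
          - C * t * Real.log t ^ (2 ^ i - 1)| ≤ A * t * Real.log t ^ (2 ^ i - 2)) :
    ∃ B : ℝ, 0 < B ∧ ∀ x : ℝ, 3 ≤ x →
      |(∑ n ∈ Finset.Icc 1 ⌊x⌋₊, ((n.divisors.card : ℝ)) ^ i * Real.log n ^ j / Real.sqrt n)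
          - 2 * C * Real.sqrt x * Real.log x ^ (2 ^ i + j - 1)|
        ≤ B * Real.sqrt x * Real.log x ^ (2 ^ i + j - 2) := by
  classical
  set c : ℕ → ℝ := fun n => ((n.divisors.card : ℝ)) ^ i with hc_def
  have hc0 : c 0 = 0 := by
    simp only [hc_def, Nat.divisors_zero, Finset.card_empty, Nat.cast_zero]
    exact zero_pow (by omega)
  have hcnn : ∀ n, 0 ≤ c n := fun n => by positivity
  set S : ℝ → ℝ := fun t => ∑ k ∈ Icc 0 ⌊t⌋₊, c k with hS_def
  set φ : ℝ → ℝ := fun t =>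
    ((j : ℝ) * Real.log t ^ (j - 1) - Real.log t ^ j / 2) / (t * Real.sqrt t) with hφ_def
  set f : ℝ → ℝ := fun t => Real.log t ^ j / Real.sqrt t with hf_def
  have h2i : 2 ≤ 2 ^ i := by
    calc 2 = 2^1 := rfl
    _ ≤ 2^i := Nat.pow_le_pow_right (by norm_num) hi
  set m : ℕ := 2 ^ i + j - 1 with hm_def
  -- S in terms of Icc 1
  have hS1 : ∀ t : ℝ, S t = ∑ k ∈ Icc 1 ⌊t⌋₊, c k := by
    intro t
    show ∑ k ∈ Icc 0 ⌊t⌋₊, c k = ∑ k ∈ Icc 1 ⌊t⌋₊, c k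
    rw [show Icc 1 ⌊t⌋₊ = Ioc 0 ⌊t⌋₊ from Finset.Icc_add_one_left_eq_Ioc 0 ⌊t⌋₊,
      Finset.Icc_eq_cons_Ioc (Nat.zero_le _), Finset.sum_cons, hc0, zero_add]
  -- error bound
  have hE : ∀ t : ℝ, 3 ≤ t → |S t - C * t * Real.log t ^ (2 ^ i - 1)|
      ≤ A * t * Real.log t ^ (2 ^ i - 2) := by
    intro t ht
    rw [hS1 t]
    exact h t ht
  -- the constant I₁
  set I₁ : ℝ := ∫ t in (1:ℝ)..3, φ t * S t with hI₁_def
  refine ⟨A + |I₁| + C * Real.sqrt 3 * Real.log 3 ^ m + 2 * C * m + 2 * C * j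
      + 2 * A * ((j:ℝ) + 1/2) + 1, by positivity, ?_⟩
  intro x hx
  have hx1 : (1:ℝ) ≤ x := by linarith
  have hx0 : (0:ℝ) < x := by linarith
  have hsx : 0 < Real.sqrt x := Real.sqrt_pos.mpr hx0
  have hlog3 := aux_log3
  have hlx : 1 ≤ Real.log x := by
    calc (1:ℝ) ≤ Real.log 3 := hlog3.le
    _ ≤ Real.log x := by gcongr <;> norm_num
  have hlxnn : 0 ≤ Real.log x := by linarith
  -- Abel summation
  have hderiv_eq : ∀ t : ℝ, 0 < t → deriv f t = φ t := fun t ht => (aux_hasDeriv_f j ht).deriv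
  have hdiff : ∀ t ∈ Set.Icc (1:ℝ) x, DifferentiableAt ℝ f t := fun t ht =>
    (aux_hasDeriv_f j (lt_of_lt_of_le one_pos ht.1)).differentiableAt
  have hint : IntegrableOn (deriv f) (Set.Icc 1 x) := by
    have hφint : IntegrableOn φ (Set.Icc 1 x) := by
      apply ContinuousOn.integrableOn_Icc
      apply (aux_contOn_phi j).mono
      exact fun t ht => lt_of_lt_of_le one_pos ht.1
    apply hφint.congr_fun ?_ measurableSet_Icc
    exact fun t ht => (hderiv_eq t (lt_of_lt_of_le one_pos ht.1)).symm
  have abel : ∑ k ∈ Icc 0 ⌊x⌋₊, f k * c k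
      = f x * S x - ∫ t in Set.Ioc 1 x, deriv f t * S t :=
    sum_mul_eq_sub_integral_mul₀ c hc0 x hdiff hint
  have hsum_eq : (∑ n ∈ Finset.Icc 1 ⌊x⌋₊,
        ((n.divisors.card : ℝ)) ^ i * Real.log n ^ j / Real.sqrt n)
      = ∑ k ∈ Icc 0 ⌊x⌋₊, f k * c k := by
    rw [show (∑ k ∈ Icc 0 ⌊x⌋₊, f k * c k) = ∑ k ∈ Icc 1 ⌊x⌋₊, f k * c k by
      rw [show Icc 1 ⌊x⌋₊ = Ioc 0 ⌊x⌋₊ from Finset.Icc_add_one_left_eq_Ioc 0 ⌊x⌋₊,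
        Finset.Icc_eq_cons_Ioc (Nat.zero_le _), Finset.sum_cons, hc0, mul_zero, zero_add]]
    apply Finset.sum_congr rfl
    intro n _
    show c n * Real.log n ^ j / Real.sqrt n = f n * c n
    rw [hf_def]
    ring
  have hIoc : ∫ t in Set.Ioc (1:ℝ) x, deriv f t * S t
      = ∫ t in Set.Ioc (1:ℝ) x, φ t * S t := by
    apply setIntegral_congr_fun measurableSet_Ioc
    intro t ht
    simp only
    rw [hderiv_eq t (by linarith [ht.1] : (0:ℝ) < t)]
  have hSint3x : IntervalIntegrable (fun t : ℝ => φ t * S t) volume 3 x :=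
    aux_phiS_intInt j c hcnn (by norm_num) hx
  have hSint13 : IntervalIntegrable (fun t : ℝ => φ t * S t) volume 1 3 :=
    aux_phiS_intInt j c hcnn one_pos (by norm_num)
  have hsplit : ∫ t in Set.Ioc (1:ℝ) x, φ t * S t = I₁ + ∫ t in (3:ℝ)..x, φ t * S t := by
    rw [← intervalIntegral.integral_of_le hx1, hI₁_def,
      intervalIntegral.integral_add_adjacent_intervals hSint13 hSint3x]
  -- main term over [3,x]
  set q : ℕ := j - 1 + (2^i - 1) with hq_def
  have hmain_int : IntervalIntegrable
      (fun t : ℝ => φ t * (C * t * Real.log t ^ (2^i-1))) volume 3 x := by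
    apply ContinuousOn.intervalIntegrable
    apply ContinuousOn.mul (((aux_contOn_phi j).mono (aux_sub_pos hx)))
    apply ContinuousOn.mul (continuousOn_const.mul continuousOn_id)
    exact ((Real.continuousOn_log.mono (fun t ht => ne_of_gt (aux_sub_pos hx ht))).pow _)
  have hmain_eq : ∫ t in (3:ℝ)..x, φ t * (C * t * Real.log t ^ (2^i-1))
      = C * j * auxJ q x - C/2 * auxJ m x := by
    have hcongr : ∀ t ∈ Set.uIcc (3:ℝ) x, φ t * (C * t * Real.log t ^ (2^i-1))
        = C * (j:ℝ) * (Real.log t ^ q / Real.sqrt t)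
          - C/2 * (Real.log t ^ m / Real.sqrt t) := by
      intro t ht
      have ht0 : 0 < t := aux_sub_pos hx ht
      have hst : (0:ℝ) < Real.sqrt t := Real.sqrt_pos.mpr ht0
      have h3 : Real.sqrt t * Real.sqrt t = t := Real.mul_self_sqrt ht0.le
      rw [hφ_def, hq_def, show m = j + (2^i-1) by omega, pow_add, pow_add]
      field_simp
    rw [intervalIntegral.integral_congr hcongr,
      intervalIntegral.integral_sub ((aux_intInt q hx).const_mul _)
        ((aux_intInt m hx).const_mul _),
      intervalIntegral.integral_const_mul, intervalIntegral.integral_const_mul]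
    rfl
  set Ierr : ℝ := ∫ t in (3:ℝ)..x, (φ t * S t - φ t * (C * t * Real.log t ^ (2^i-1)))
    with hIerr_def
  have hI2 : ∫ t in (3:ℝ)..x, φ t * S t
      = (C * j * auxJ q x - C/2 * auxJ m x) + Ierr := by
    rw [hIerr_def, intervalIntegral.integral_sub hSint3x hmain_int, hmain_eq]
    ring
  -- bound on Ierr
  have hD0 : 0 ≤ A * ((j:ℝ) + 1/2) * Real.log x ^ (m-1) := by positivity
  have hIerr_bound : |Ierr|
      ≤ A * ((j:ℝ) + 1/2) * Real.log x ^ (m-1) * (2 * Real.sqrt x) := by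
    have hgint : IntervalIntegrable
        (fun t : ℝ => A * ((j:ℝ) + 1/2) * Real.log x ^ (m-1) * (Real.log t ^ 0 / Real.sqrt t))
        volume 3 x := (aux_intInt 0 hx).const_mul _
    have hptwise : ∀ᵐ t ∂(volume.restrict (Set.uIoc (3:ℝ) x)),
        ‖φ t * S t - φ t * (C * t * Real.log t ^ (2^i-1))‖
        ≤ A * ((j:ℝ) + 1/2) * Real.log x ^ (m-1) * (Real.log t ^ 0 / Real.sqrt t) := by
      rw [Set.uIoc_of_le (by linarith : (3:ℝ) ≤ x)]
      apply (ae_restrict_iff' measurableSet_Ioc).mpr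
      apply ae_of_all
      intro t ht
      have ht3 : (3:ℝ) ≤ t := ht.1.le
      have ht0 : (0:ℝ) < t := by linarith
      have hst : (0:ℝ) < Real.sqrt t := Real.sqrt_pos.mpr ht0
      have hu1 : 1 ≤ Real.log t := by
        calc (1:ℝ) ≤ Real.log 3 := hlog3.le
        _ ≤ Real.log t := by gcongr <;> norm_num
      have htx : t ≤ x := ht.2
      have hux : Real.log t ≤ Real.log x := by gcongr <;> norm_num
      have hEt := hE t ht3
      have hφabs : |φ t| ≤ ((j:ℝ) * Real.log t ^ (j-1) + Real.log t ^ j / 2)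
          / (t * Real.sqrt t) := by
        rw [hφ_def, abs_div, abs_of_pos (mul_pos ht0 hst)]
        gcongr
        calc |(j:ℝ) * Real.log t ^ (j-1) - Real.log t ^ j / 2|
            ≤ |(j:ℝ) * Real.log t ^ (j-1)| + |Real.log t ^ j / 2| := abs_sub _ _
        _ = (j:ℝ) * Real.log t ^ (j-1) + Real.log t ^ j / 2 := by
            rw [abs_of_nonneg (by positivity), abs_of_nonneg (by positivity)]
      have hExp1 : (j:ℝ) * (Real.log t ^ (j-1) * Real.log t ^ (2^i-2))
          ≤ (j:ℝ) * Real.log x ^ (m-1) := by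
        rcases Nat.eq_zero_or_pos j with hj | hj
        · simp [hj]
        · apply mul_le_mul_of_nonneg_left ?_ (Nat.cast_nonneg j)
          rw [← pow_add]
          calc Real.log t ^ (j-1+(2^i-2)) ≤ Real.log t ^ (m-1) :=
                pow_le_pow_right₀ hu1 (by omega)
          _ ≤ Real.log x ^ (m-1) := pow_le_pow_left₀ (by linarith) hux _
      have hExp2 : Real.log t ^ j * Real.log t ^ (2^i-2) ≤ Real.log x ^ (m-1) := by
        rw [← pow_add, show j + (2^i-2) = m - 1 by omega]
        exact pow_le_pow_left₀ (by linarith) hux _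
      calc ‖φ t * S t - φ t * (C * t * Real.log t ^ (2^i-1))‖
          = |φ t| * |S t - C * t * Real.log t ^ (2^i-1)| := by
            rw [Real.norm_eq_abs, ← mul_sub, abs_mul]
      _ ≤ (((j:ℝ) * Real.log t ^ (j-1) + Real.log t ^ j / 2) / (t * Real.sqrt t))
            * (A * t * Real.log t ^ (2^i-2)) :=
          mul_le_mul hφabs hEt (abs_nonneg _) (by positivity)
      _ = A * ((j:ℝ) * (Real.log t ^ (j-1) * Real.log t ^ (2^i-2))
            + Real.log t ^ j * Real.log t ^ (2^i-2) / 2) / Real.sqrt t := by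
          have h3 : Real.sqrt t * Real.sqrt t = t := Real.mul_self_sqrt ht0.le
          field_simp
      _ ≤ A * ((j:ℝ) * Real.log x ^ (m-1) + Real.log x ^ (m-1) / 2) / Real.sqrt t := by
          gcongr
      _ = A * ((j:ℝ) + 1/2) * Real.log x ^ (m-1) * (Real.log t ^ 0 / Real.sqrt t) := by
          rw [pow_zero]
          ring
    calc |Ierr| = ‖Ierr‖ := (Real.norm_eq_abs _).symm
    _ ≤ |∫ t in (3:ℝ)..x, A * ((j:ℝ) + 1/2) * Real.log x ^ (m-1)
          * (Real.log t ^ 0 / Real.sqrt t)| :=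
        (intervalIntegral.norm_integral_le_of_norm_le (by linarith)
          (by rw [Set.uIoc_of_le (by linarith : (3:ℝ) ≤ x)] at hptwise
              exact (ae_restrict_iff' measurableSet_Ioc).mp hptwise) hgint).trans (le_abs_self _)
    _ = A * ((j:ℝ) + 1/2) * Real.log x ^ (m-1) * auxJ 0 x := by
        rw [intervalIntegral.integral_const_mul]
        have h0 : (∫ t in (3:ℝ)..x, Real.log t ^ 0 / Real.sqrt t) = auxJ 0 x := rfl
        rw [h0, abs_of_nonneg (mul_nonneg hD0 (auxJ_nonneg 0 hx))]
    _ ≤ A * ((j:ℝ) + 1/2) * Real.log x ^ (m-1) * (2 * Real.sqrt x * Real.log x ^ 0) := by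
        gcongr
        exact auxJ_le 0 hx
    _ = A * ((j:ℝ) + 1/2) * Real.log x ^ (m-1) * (2 * Real.sqrt x) := by
        rw [pow_zero, mul_one]
  -- final assembly
  have hgoalexp : 2 ^ i + j - 2 = m - 1 := by omega
  have hJq_nonneg : 0 ≤ auxJ q x := auxJ_nonneg q hx
  have hJm1_nonneg : 0 ≤ auxJ (m-1) x := auxJ_nonneg (m-1) hx
  have hJq_le : (j:ℝ) * auxJ q x ≤ (j:ℝ) * (2 * Real.sqrt x * Real.log x ^ (m-1)) := by
    rcases Nat.eq_zero_or_pos j with hj | hj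
    · simp [hj]
    · apply mul_le_mul_of_nonneg_left ?_ (Nat.cast_nonneg j)
      calc auxJ q x = auxJ (m-1) x := by rw [show q = m - 1 by omega]
      _ ≤ 2 * Real.sqrt x * Real.log x ^ (m-1) := auxJ_le (m-1) hx
  have hJm1_le : auxJ (m-1) x ≤ 2 * Real.sqrt x * Real.log x ^ (m-1) := auxJ_le (m-1) hx
  have hrecm := auxJ_rec m hx
  have hfxmain : f x * (C * x * Real.log x ^ (2^i-1))
      = C * Real.sqrt x * Real.log x ^ m := by
    show Real.log x ^ j / Real.sqrt x * (C * x * Real.log x ^ (2^i-1)) = _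
    calc Real.log x ^ j / Real.sqrt x * (C * x * Real.log x ^ (2^i-1))
        = C * (x / Real.sqrt x) * (Real.log x ^ j * Real.log x ^ (2^i-1)) := by ring
    _ = C * Real.sqrt x * Real.log x ^ m := by
        rw [Real.div_sqrt, show m = j + (2^i-1) by omega, pow_add]
  have hfx_nn : 0 ≤ f x := by
    show 0 ≤ Real.log x ^ j / Real.sqrt x
    positivity
  have hfxE : |f x * S x - C * Real.sqrt x * Real.log x ^ m|
      ≤ A * Real.sqrt x * Real.log x ^ (m-1) := by
    have hsplit2 : f x * S x - C * Real.sqrt x * Real.log x ^ m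
        = f x * (S x - C * x * Real.log x ^ (2^i-1)) := by
      rw [mul_sub, hfxmain]
    rw [hsplit2, abs_mul, abs_of_nonneg hfx_nn]
    calc f x * |S x - C * x * Real.log x ^ (2^i-1)|
        ≤ f x * (A * x * Real.log x ^ (2^i-2)) :=
          mul_le_mul_of_nonneg_left (hE x hx) hfx_nn
    _ = A * (x / Real.sqrt x) * (Real.log x ^ j * Real.log x ^ (2^i-2)) := by
        show Real.log x ^ j / Real.sqrt x * (A * x * Real.log x ^ (2^i-2)) = _
        ring
    _ = A * Real.sqrt x * Real.log x ^ (m-1) := by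
        rw [Real.div_sqrt, ← pow_add, show j + (2^i-2) = m-1 by omega]
  have hid : (∑ n ∈ Finset.Icc 1 ⌊x⌋₊,
        ((n.divisors.card : ℝ)) ^ i * Real.log n ^ j / Real.sqrt n)
        - 2 * C * Real.sqrt x * Real.log x ^ m
      = (f x * S x - C * Real.sqrt x * Real.log x ^ m) - I₁ - C * j * auxJ q x
        - C * Real.sqrt 3 * Real.log 3 ^ m - C * m * auxJ (m-1) x - Ierr := by
    have e1 : (∑ n ∈ Finset.Icc 1 ⌊x⌋₊,
          ((n.divisors.card : ℝ)) ^ i * Real.log n ^ j / Real.sqrt n)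
        = f x * S x - (I₁ + (C * j * auxJ q x - C/2 * auxJ m x + Ierr)) := by
      rw [hsum_eq, abel, hIoc, hsplit, hI2]
    have e2 : C/2 * auxJ m x = C * Real.sqrt x * Real.log x ^ m
        - C * Real.sqrt 3 * Real.log 3 ^ m - C * m * auxJ (m-1) x := by
      rw [hrecm]; ring
    rw [e1]; linarith [e2]
  have hone : (1:ℝ) ≤ Real.sqrt x * Real.log x ^ (m-1) := by
    have h1 : (1:ℝ) ≤ Real.sqrt x := by
      rw [show (1:ℝ) = Real.sqrt 1 by simp]
      exact Real.sqrt_le_sqrt hx1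
    have h2 : (1:ℝ) ≤ Real.log x ^ (m-1) := by
      calc (1:ℝ) = 1 ^ (m-1) := by simp
      _ ≤ Real.log x ^ (m-1) := pow_le_pow_left₀ (by norm_num) hlx _
    calc (1:ℝ) = 1 * 1 := by norm_num
    _ ≤ Real.sqrt x * Real.log x ^ (m-1) :=
        mul_le_mul h1 h2 zero_le_one (le_trans zero_le_one h1)
  have hYnn : 0 ≤ Real.sqrt x * Real.log x ^ (m-1) := by positivity
  have b1 : C * ((j:ℝ) * auxJ q x)
      ≤ C * ((j:ℝ) * (2 * Real.sqrt x * Real.log x ^ (m-1))) :=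
    mul_le_mul_of_nonneg_left hJq_le hC.le
  have b1' : 0 ≤ C * (j:ℝ) * auxJ q x := by positivity
  have b2 : C * (m:ℝ) * auxJ (m-1) x
      ≤ C * (m:ℝ) * (2 * Real.sqrt x * Real.log x ^ (m-1)) :=
    mul_le_mul_of_nonneg_left hJm1_le (by positivity)
  have b2' : 0 ≤ C * (m:ℝ) * auxJ (m-1) x := by positivity
  have c1 : |I₁| ≤ |I₁| * (Real.sqrt x * Real.log x ^ (m-1)) :=
    le_mul_of_one_le_right (abs_nonneg _) hone
  have hL3m : 0 ≤ C * Real.sqrt 3 * Real.log 3 ^ m := by positivity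
  have c2 : C * Real.sqrt 3 * Real.log 3 ^ m
      ≤ (C * Real.sqrt 3 * Real.log 3 ^ m) * (Real.sqrt x * Real.log x ^ (m-1)) :=
    le_mul_of_one_le_right hL3m hone
  rw [hgoalexp]
  have habs1 := abs_le.mp hfxE
  have habs2 := abs_le.mp hIerr_bound
  have hI1a := le_abs_self I₁
  have hI1b := neg_abs_le I₁
  rw [abs_le]
  constructor
  · linarith [hid, habs1.1, habs2.2, habs1.2, habs2.1, b1, b1', b2, b2', c1, c2, hI1a, hI1b, hYnn]
  · linarith [hid, habs1.1, habs2.2, habs1.2, habs2.1, b1, b1', b2, b2', c1, c2, hI1a, hI1b, hYnn]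
end

section
/- Let i ≥ 1 and j ≥ 0 be integers and θ > 1 a real number, and suppose there exist constants C > 0 and A > 0 such that |Σ_{n ≤ t} τ(n)^i − C·t·(log t)^{2^i − 1}| ≤ A·t·(log t)^{2^i − 2} for all real t ≥ 3. Then there exists a constant B > 0, depending only on i, j, θ, C and A, such that for all real x ≥ 3 the (convergent) series satisfies Σ_{n > x} τ(n)^i (log n)^j n^{−θ} ≤ B·(log x)^{2^i + j − 1}·x^{1−θ}. -/
open Finset

private lemma tau_blk (i j : ℕ) (θ C A : ℝ) (hθ : 1 < θ) (hCA : 0 < C + A)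
    (E : ∀ m : ℕ, 3 ≤ m → (∑ n ∈ Finset.Icc 1 m, ((n.divisors.card : ℝ)) ^ i)
        ≤ (C + A) * m * Real.log m ^ (2 ^ i - 1))
    (N : ℕ) (hN : 3 ≤ N) :
    ∑ p ∈ Finset.Ioc N (2 * N),
        ((p.divisors.card : ℝ)) ^ i * Real.log p ^ j * (p : ℝ) ^ (-θ)
      ≤ 2 * (C + A) * (N : ℝ) ^ (1 - θ) * Real.log (2 * (N : ℝ)) ^ (2 ^ i - 1 + j) := by
  have hN0 : (0 : ℝ) < N := by
    have : 0 < N := by omega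
    exact_mod_cast this
  have hN1 : (1 : ℝ) ≤ N := by
    have : 1 ≤ N := by omega
    exact_mod_cast this
  have hL0 : 0 ≤ Real.log (2 * (N : ℝ)) := Real.log_nonneg (by nlinarith)
  set L : ℝ := Real.log (2 * (N : ℝ)) with hLdef
  have step1 : ∑ p ∈ Finset.Ioc N (2 * N),
        ((p.divisors.card : ℝ)) ^ i * Real.log p ^ j * (p : ℝ) ^ (-θ)
      ≤ (∑ p ∈ Finset.Ioc N (2 * N), ((p.divisors.card : ℝ)) ^ i) * (L ^ j * (N : ℝ) ^ (-θ)) := by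
    rw [Finset.sum_mul]
    apply Finset.sum_le_sum
    intro p hp
    rw [Finset.mem_Ioc] at hp
    have hp0 : (0 : ℝ) < p := by
      have : 0 < p := by omega
      exact_mod_cast this
    have hNp : (N : ℝ) ≤ p := by exact_mod_cast le_of_lt hp.1
    have hp2N : (p : ℝ) ≤ 2 * N := by exact_mod_cast hp.2
    rw [← mul_assoc]
    have hlogle : Real.log p ^ j ≤ L ^ j :=
      pow_le_pow_left₀ (Real.log_natCast_nonneg p) (Real.log_le_log hp0 hp2N) j
    have hrple : (p : ℝ) ^ (-θ) ≤ (N : ℝ) ^ (-θ) :=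
      Real.rpow_le_rpow_of_nonpos hN0 hNp (by linarith)
    apply mul_le_mul
    · apply mul_le_mul_of_nonneg_left hlogle (by positivity)
    · exact hrple
    · positivity
    · positivity
  have step2 : (∑ p ∈ Finset.Ioc N (2 * N), ((p.divisors.card : ℝ)) ^ i)
      ≤ ∑ p ∈ Finset.Icc 1 (2 * N), ((p.divisors.card : ℝ)) ^ i := by
    apply Finset.sum_le_sum_of_subset_of_nonneg
    · intro p hp
      rw [Finset.mem_Ioc] at hp
      rw [Finset.mem_Icc]
      omega
    · intro p _ _; positivity
  have step3 : (∑ p ∈ Finset.Icc 1 (2 * N), ((p.divisors.card : ℝ)) ^ i)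
      ≤ (C + A) * (2 * (N : ℝ)) * L ^ (2 ^ i - 1) := by
    have := E (2 * N) (by omega)
    have hc : ((2 * N : ℕ) : ℝ) = 2 * (N : ℝ) := by push_cast; ring
    rwa [hc] at this
  have hnn : 0 ≤ L ^ j * (N : ℝ) ^ (-θ) := by positivity
  have hsplit : (N : ℝ) ^ (1 - θ) = (N : ℝ) * (N : ℝ) ^ (-θ) := by
    rw [show (1 - θ) = 1 + (-θ) by ring, Real.rpow_add hN0, Real.rpow_one]
  calc ∑ p ∈ Finset.Ioc N (2 * N),
        ((p.divisors.card : ℝ)) ^ i * Real.log p ^ j * (p : ℝ) ^ (-θ)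
      ≤ (∑ p ∈ Finset.Ioc N (2 * N), ((p.divisors.card : ℝ)) ^ i) * (L ^ j * (N : ℝ) ^ (-θ)) := step1
    _ ≤ ((C + A) * (2 * (N : ℝ)) * L ^ (2 ^ i - 1)) * (L ^ j * (N : ℝ) ^ (-θ)) := by
        apply mul_le_mul_of_nonneg_right (le_trans step2 step3) hnn
    _ = 2 * (C + A) * (N : ℝ) ^ (1 - θ) * L ^ (2 ^ i - 1 + j) := by
        rw [hsplit, pow_add]; ring

set_option maxHeartbeats 1000000 in
/-- Tail estimate for the series `Σ_{n > x} τ(n)^i (log n)^j n^{-θ}`. -/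
theorem stmt_2 (i j : ℕ) (hi : 1 ≤ i) (θ : ℝ) (hθ : 1 < θ) (C A : ℝ) (hC : 0 < C) (hA : 0 < A)
    (h : ∀ t : ℝ, 3 ≤ t →
      |(∑ n ∈ Finset.Icc 1 ⌊t⌋₊, ((n.divisors.card : ℝ)) ^ i)
          - C * t * Real.log t ^ (2 ^ i - 1)| ≤ A * t * Real.log t ^ (2 ^ i - 2)) :
    ∃ B : ℝ, 0 < B ∧ ∀ x : ℝ, 3 ≤ x →
      Summable (fun n : ℕ =>
        if x < (n : ℝ) then ((n.divisors.card : ℝ)) ^ i * Real.log n ^ j * (n : ℝ) ^ (-θ)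
        else 0) ∧
      (∑' n : ℕ,
        if x < (n : ℝ) then ((n.divisors.card : ℝ)) ^ i * Real.log n ^ j * (n : ℝ) ^ (-θ)
        else 0)
        ≤ B * Real.log x ^ (2 ^ i + j - 1) * x ^ (1 - θ) := by
  have hCA : 0 < C + A := by linarith
  set M : ℕ := 2 ^ i - 1 + j with hMdef
  have hMeq : 2 ^ i + j - 1 = M := by
    have h2i : 1 ≤ 2 ^ i := Nat.one_le_two_pow
    omega
  -- the partial sum bound at natural arguments
  have E : ∀ m : ℕ, 3 ≤ m → (∑ n ∈ Finset.Icc 1 m, ((n.divisors.card : ℝ)) ^ i)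
      ≤ (C + A) * m * Real.log m ^ (2 ^ i - 1) := by
    intro m hm
    have h3 : (3 : ℝ) ≤ m := by exact_mod_cast hm
    have hm0 : (0 : ℝ) < m := by linarith
    have hh := h m h3
    rw [Nat.floor_natCast] at hh
    have hL : 1 ≤ Real.log m := by
      rw [Real.le_log_iff_exp_le hm0]
      calc Real.exp 1 ≤ 2.7182818286 := le_of_lt Real.exp_one_lt_d9
        _ ≤ 3 := by norm_num
        _ ≤ m := h3
    have hpow : Real.log m ^ (2 ^ i - 2) ≤ Real.log m ^ (2 ^ i - 1) :=
      pow_le_pow_right₀ hL (Nat.sub_le_sub_left (by norm_num) (2 ^ i))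
    have habs := (abs_le.mp hh).2
    have hmul : A * m * Real.log m ^ (2 ^ i - 2) ≤ A * m * Real.log m ^ (2 ^ i - 1) := by
      apply mul_le_mul_of_nonneg_left hpow (by positivity)
    nlinarith
  -- geometric-type series constant
  set r : ℝ := (2 : ℝ) ^ (1 - θ) with hrdef
  have hr0 : 0 < r := Real.rpow_pos_of_pos (by norm_num) _
  have hr1 : r < 1 := Real.rpow_lt_one_of_one_lt_of_neg (by norm_num) (by linarith)
  have hsumm : Summable (fun k : ℕ => ((k : ℝ) + 2) ^ M * r ^ k) := by
    have hbase : Summable (fun n : ℕ => (n : ℝ) ^ M * r ^ n) :=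
      summable_pow_mul_geometric_of_norm_lt_one M (by
        rw [Real.norm_eq_abs, abs_of_pos hr0]; exact hr1)
    have hshift : Summable (fun k : ℕ => ((k + 2 : ℕ) : ℝ) ^ M * r ^ (k + 2)) :=
      (summable_nat_add_iff 2).mpr hbase
    have := hshift.mul_left (1 / r ^ 2)
    apply this.congr
    intro k
    push_cast
    rw [pow_add]
    have hr2 : r ^ 2 ≠ 0 := by positivity
    field_simp
    ring
  set K : ℝ := ∑' k : ℕ, ((k : ℝ) + 2) ^ M * r ^ k with hKdef
  have hK0 : 0 < K := by
    have h1 := Summable.le_tsum hsumm 0 (fun j _ => by positivity)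
    have h2 : (0 : ℝ) < (((0 : ℕ) : ℝ) + 2) ^ M * r ^ 0 := by positivity
    linarith
  refine ⟨2 * (C + A) * K * (2 / 3 : ℝ) ^ (1 - θ), by positivity, ?_⟩
  intro x hx
  set m : ℕ := ⌊x⌋₊ with hmdef
  have hx0 : (0 : ℝ) ≤ x := by linarith
  have hm3 : 3 ≤ m := Nat.le_floor (by exact_mod_cast hx)
  have hmx : (m : ℝ) ≤ x := Nat.floor_le hx0
  have hxm1 : x < m + 1 := Nat.lt_floor_add_one x
  have hm0 : (0 : ℝ) < m := by
    have : (3 : ℝ) ≤ m := by exact_mod_cast hm3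
    linarith
  have hmlow : (2 / 3) * x ≤ m := by linarith
  -- nonnegativity of the general term
  set g : ℕ → ℝ := fun p => ((p.divisors.card : ℝ)) ^ i * Real.log p ^ j * (p : ℝ) ^ (-θ)
    with hgdef
  have hg0 : ∀ p, 0 ≤ g p := by
    intro p
    have := Real.log_natCast_nonneg p
    positivity
  set f : ℕ → ℝ := fun n =>
    if x < (n : ℝ) then ((n.divisors.card : ℝ)) ^ i * Real.log n ^ j * (n : ℝ) ^ (-θ) else 0
    with hfdef
  have hf0 : ∀ n, 0 ≤ f n := by
    intro n
    simp only [hfdef]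
    split
    · exact hg0 n
    · exact le_rfl
  set D : ℝ := 2 * (C + A) * (m : ℝ) ^ (1 - θ) * Real.log m ^ M with hDdef
  have hD0 : 0 ≤ D := by positivity
  -- dyadic block bound
  have hblock : ∀ k : ℕ, ∑ p ∈ Finset.Ioc (m * 2 ^ k) (m * 2 ^ (k + 1)), g p
      ≤ D * (((k : ℝ) + 2) ^ M * r ^ k) := by
    intro k
    have hN3 : 3 ≤ m * 2 ^ k := le_trans hm3 (Nat.le_mul_of_pos_right m (Nat.two_pow_pos k))
    have hNcast : ((m * 2 ^ k : ℕ) : ℝ) = (m : ℝ) * 2 ^ k := by push_cast; ring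
    have hblk := tau_blk i j θ C A hθ hCA E (m * 2 ^ k) hN3
    have hidx : 2 * (m * 2 ^ k) = m * 2 ^ (k + 1) := by ring
    rw [hidx] at hblk
    have e1 : ((m * 2 ^ k : ℕ) : ℝ) ^ (1 - θ) = (m : ℝ) ^ (1 - θ) * r ^ k := by
      rw [hNcast, Real.mul_rpow (le_of_lt hm0) (by positivity)]
      congr 1
      rw [← Real.rpow_natCast (2 : ℝ) k, ← Real.rpow_mul (by norm_num),
        mul_comm ((k : ℕ) : ℝ) (1 - θ), Real.rpow_mul (by norm_num), Real.rpow_natCast]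
    have hargeq : 2 * ((m * 2 ^ k : ℕ) : ℝ) = (m : ℝ) * 2 ^ (k + 1) := by
      rw [hNcast]; ring
    have hlog2 : Real.log 2 ≤ Real.log m := by
      apply Real.log_le_log (by norm_num)
      have : (3 : ℝ) ≤ m := by exact_mod_cast hm3
      linarith
    have hlogarg : Real.log (2 * ((m * 2 ^ k : ℕ) : ℝ)) ≤ ((k : ℝ) + 2) * Real.log m := by
      rw [hargeq, Real.log_mul (ne_of_gt hm0) (by positivity), Real.log_pow]
      push_cast
      have hlm : 0 ≤ Real.log m := Real.log_natCast_nonneg m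
      nlinarith
    have hlognn : 0 ≤ Real.log (2 * ((m * 2 ^ k : ℕ) : ℝ)) := by
      apply Real.log_nonneg
      rw [hNcast]
      have : (1 : ℝ) ≤ (m : ℝ) := by linarith
      nlinarith [pow_pos (by norm_num : (0:ℝ) < 2) k, one_le_pow₀ (by norm_num : (1:ℝ) ≤ 2) (n := k)]
    have hlogpow : Real.log (2 * ((m * 2 ^ k : ℕ) : ℝ)) ^ M
        ≤ ((k : ℝ) + 2) ^ M * Real.log m ^ M := by
      rw [← mul_pow]
      exact pow_le_pow_left₀ hlognn hlogarg M
    calc ∑ p ∈ Finset.Ioc (m * 2 ^ k) (m * 2 ^ (k + 1)), g p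
        ≤ 2 * (C + A) * ((m * 2 ^ k : ℕ) : ℝ) ^ (1 - θ)
            * Real.log (2 * ((m * 2 ^ k : ℕ) : ℝ)) ^ M := hblk
      _ ≤ 2 * (C + A) * ((m * 2 ^ k : ℕ) : ℝ) ^ (1 - θ)
            * (((k : ℝ) + 2) ^ M * Real.log m ^ M) := by
          apply mul_le_mul_of_nonneg_left hlogpow (by positivity)
      _ = D * (((k : ℝ) + 2) ^ M * r ^ k) := by
          rw [e1, hDdef]; ring
  -- cumulative bound by induction
  have hkey : ∀ kk : ℕ, ∑ p ∈ Finset.Ioc m (m * 2 ^ kk), g p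
      ≤ D * ∑ k ∈ Finset.range kk, ((k : ℝ) + 2) ^ M * r ^ k := by
    intro kk
    induction kk with
    | zero => simp
    | succ n ih =>
      have h1 : m ≤ m * 2 ^ n := Nat.le_mul_of_pos_right m (Nat.two_pow_pos n)
      have h2 : m * 2 ^ n ≤ m * 2 ^ (n + 1) := by
        apply Nat.mul_le_mul_left
        exact Nat.pow_le_pow_right (by norm_num) (by omega)
      rw [← Finset.sum_Ioc_consecutive g h1 h2, Finset.sum_range_succ, mul_add]
      exact add_le_add ih (hblock n)
  -- partial sums of the series are uniformly bounded
  have hKpart : ∀ kk : ℕ, ∑ k ∈ Finset.range kk, ((k : ℝ) + 2) ^ M * r ^ k ≤ K :=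
    fun kk => Summable.sum_le_tsum (Finset.range kk) (fun k _ => by positivity) hsumm
  have hDK : D * K ≤ (2 * (C + A) * K * (2 / 3 : ℝ) ^ (1 - θ)) * Real.log x ^ (2 ^ i + j - 1)
      * x ^ (1 - θ) := by
    rw [hMeq]
    have hmr : (m : ℝ) ^ (1 - θ) ≤ (2 / 3 : ℝ) ^ (1 - θ) * x ^ (1 - θ) := by
      rw [← Real.mul_rpow (by norm_num) hx0]
      exact Real.rpow_le_rpow_of_nonpos (by linarith) hmlow (by linarith)
    have hlogm : Real.log m ^ M ≤ Real.log x ^ M :=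
      pow_le_pow_left₀ (Real.log_natCast_nonneg m) (Real.log_le_log hm0 hmx) M
    calc D * K = 2 * (C + A) * K * ((m : ℝ) ^ (1 - θ) * Real.log m ^ M) := by
          rw [hDdef]; ring
      _ ≤ 2 * (C + A) * K * ((2 / 3 : ℝ) ^ (1 - θ) * x ^ (1 - θ) * Real.log x ^ M) := by
          apply mul_le_mul_of_nonneg_left _ (by positivity)
          calc (m : ℝ) ^ (1 - θ) * Real.log m ^ M
              ≤ ((2 / 3 : ℝ) ^ (1 - θ) * x ^ (1 - θ)) * Real.log x ^ M := by
                apply mul_le_mul hmr hlogm (by positivity) (by positivity)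
            _ = (2 / 3 : ℝ) ^ (1 - θ) * x ^ (1 - θ) * Real.log x ^ M := by ring
      _ = (2 * (C + A) * K * (2 / 3 : ℝ) ^ (1 - θ)) * Real.log x ^ M * x ^ (1 - θ) := by ring
  -- uniform bound on partial sums of f
  have hfbound : ∀ n : ℕ, ∑ p ∈ Finset.range n, f p
      ≤ (2 * (C + A) * K * (2 / 3 : ℝ) ^ (1 - θ)) * Real.log x ^ (2 ^ i + j - 1)
          * x ^ (1 - θ) := by
    intro n
    have hstep : ∑ p ∈ Finset.range n, f p = ∑ p ∈ (Finset.range n).filter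
        (fun p : ℕ => x < (p : ℝ)), g p := by
      rw [Finset.sum_filter]
    have hsub : (Finset.range n).filter (fun p : ℕ => x < (p : ℝ)) ⊆ Finset.Ioc m (m * 2 ^ n) := by
      intro p hp
      rw [Finset.mem_filter, Finset.mem_range] at hp
      rw [Finset.mem_Ioc]
      constructor
      · exact (Nat.floor_lt hx0).mpr hp.2
      · calc p ≤ n := le_of_lt hp.1
          _ ≤ 2 ^ n := Nat.le_of_lt (Nat.lt_two_pow_self (n := n))
          _ ≤ m * 2 ^ n := Nat.le_mul_of_pos_left _ (by omega)
    calc ∑ p ∈ Finset.range n, f p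
        = ∑ p ∈ (Finset.range n).filter (fun p : ℕ => x < (p : ℝ)), g p := hstep
      _ ≤ ∑ p ∈ Finset.Ioc m (m * 2 ^ n), g p :=
          Finset.sum_le_sum_of_subset_of_nonneg hsub (fun p _ _ => hg0 p)
      _ ≤ D * ∑ k ∈ Finset.range n, ((k : ℝ) + 2) ^ M * r ^ k := hkey n
      _ ≤ D * K := mul_le_mul_of_nonneg_left (hKpart n) hD0
      _ ≤ _ := hDK
  have hfs : Summable f := summable_of_sum_range_le hf0 hfbound
  exact ⟨hfs, Summable.tsum_le_of_sum_range_le hfs hfbound⟩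
end

section
/- There exists an absolute constant C > 0 such that for all positive integers m and n the series Σ_{r ≥ 1} 2^{ω(r)} · gcd(m, n, r)^{1/2} · r^{−3/2} converges and satisfies Σ_{r ≥ 1} 2^{ω(r)} · gcd(m, n, r)^{1/2} · r^{−3/2} ≤ C·(log(2·gcd(m,n)))², where gcd(m,n,r) denotes the greatest common divisor of m, n and r. -/
open scoped ENNReal NNReal

private lemma two_pow_omega_le_card_divisors (r : ℕ) (hr : r ≠ 0) :
    2 ^ r.primeFactors.card ≤ r.divisors.card := by
  rw [← Finset.card_powerset]
  apply Finset.card_le_card_of_injOn (fun S => ∏ p ∈ S, p)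
  · intro S hS
    rw [Finset.mem_coe, Finset.mem_powerset] at hS
    rw [Finset.mem_coe, Nat.mem_divisors]
    exact ⟨(Finset.prod_dvd_prod_of_subset _ _ _ hS).trans (Nat.prod_primeFactors_dvd r), hr⟩
  · intro S hS T hT hST
    simp only [Finset.mem_coe, Finset.mem_powerset] at hS hT
    have h1 : Nat.primeFactors (∏ p ∈ S, p) = S :=
      Nat.primeFactors_prod (fun p hp => Nat.prime_of_mem_primeFactors (hS hp))
    have h2 : Nat.primeFactors (∏ p ∈ T, p) = T :=
      Nat.primeFactors_prod (fun p hp => Nat.prime_of_mem_primeFactors (hT hp))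
    simpa [h1, h2] using congrArg Nat.primeFactors hST

/-- `Σ_{r ≥ 1} 2^{ω(r)} gcd(m,n,r)^{1/2} r^{-3/2} ≪ (log(2·gcd(m,n)))²`. -/
theorem stmt_4 :
    ∃ C : ℝ, 0 < C ∧ ∀ m n : ℕ, 0 < m → 0 < n →
      Summable (fun r : ℕ+ =>
        (2 : ℝ) ^ (r : ℕ).primeFactors.card * Real.sqrt (Nat.gcd (Nat.gcd m n) r)
          / ((r : ℕ) : ℝ) ^ (3 / 2 : ℝ)) ∧
      (∑' r : ℕ+,
        (2 : ℝ) ^ (r : ℕ).primeFactors.card * Real.sqrt (Nat.gcd (Nat.gcd m n) r)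
          / ((r : ℕ) : ℝ) ^ (3 / 2 : ℝ))
        ≤ C * Real.log (2 * Nat.gcd m n) ^ 2 := by
  have hZsum : Summable (fun b : ℕ+ => 1 / ((b : ℕ) : ℝ) ^ (3/2 : ℝ)) := by
    have h : Summable (fun n : ℕ => 1 / (n : ℝ) ^ (3/2 : ℝ)) :=
      (Real.summable_one_div_nat_rpow).mpr (by norm_num)
    exact h.comp_injective PNat.coe_injective
  set Z : ℝ := ∑' b : ℕ+, 1 / ((b : ℕ) : ℝ) ^ (3/2 : ℝ) with hZdef
  have hZ0 : 0 ≤ Z := tsum_nonneg (fun b => by positivity)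
  have hlog2 : 0 < Real.log 2 := Real.log_pos (by norm_num)
  set B : ℝ := Z * (1 + (Real.log 2)⁻¹) with hBdef
  have hB0 : 0 ≤ B := by positivity
  refine ⟨B ^ 2 + 1, by positivity, ?_⟩
  intro m n hm hn
  set g : ℕ := Nat.gcd m n with hgdef
  have hg : 0 < g := Nat.gcd_pos_of_pos_left _ hm
  have hg1 : (1 : ℝ) ≤ (g : ℝ) := by exact_mod_cast hg
  have hloggnn : 0 ≤ Real.log g := Real.log_nonneg hg1
  set f : ℕ+ → ℝ := fun r =>
    (2 : ℝ) ^ (r : ℕ).primeFactors.card * Real.sqrt (Nat.gcd g r)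
      / ((r : ℕ) : ℝ) ^ (3/2 : ℝ) with hfdef
  have hf0 : ∀ r, 0 ≤ f r := fun r => by
    rw [hfdef]; positivity
  set h : ℕ+ → ℝ≥0∞ := fun a =>
    ENNReal.ofReal (Real.sqrt (Nat.gcd g a) / ((a : ℕ) : ℝ) ^ (3/2 : ℝ)) with hhdef
  set φ : ℕ+ × ℕ+ → ℕ+ := fun p => p.1 * p.2 with hφdef
  -- Step 1 : pointwise bound by the fiber sums
  have key1 : ∀ r : ℕ+, ENNReal.ofReal (f r)
      ≤ ∑' p : φ ⁻¹' {r}, (fun p : ℕ+ × ℕ+ => h p.1 * h p.2) (↑p : ℕ+ × ℕ+) := by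
    intro r
    have hrpos : 0 < (r : ℕ) := r.pos
    set t : ℝ := Real.sqrt (Nat.gcd g r) / ((r : ℕ) : ℝ) ^ (3/2 : ℝ) with htdef
    have ht0 : 0 ≤ t := by rw [htdef]; positivity
    -- the injection from divisors into the fiber
    have hmk : ∀ d : {d : ℕ // d ∈ (r : ℕ).divisors},
        (⟨(d : ℕ), Nat.pos_of_mem_divisors d.2⟩ : ℕ+) *
          (⟨(r : ℕ) / (d : ℕ), Nat.div_pos (Nat.le_of_dvd hrpos (Nat.mem_divisors.mp d.2).1)
            (Nat.pos_of_mem_divisors d.2)⟩ : ℕ+) = r := by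
      intro d
      apply PNat.coe_injective
      exact Nat.mul_div_cancel' (Nat.mem_divisors.mp d.2).1
    set i : {d : ℕ // d ∈ (r : ℕ).divisors} → (φ ⁻¹' {r}) := fun d =>
      ⟨(⟨(d : ℕ), Nat.pos_of_mem_divisors d.2⟩,
        ⟨(r : ℕ) / (d : ℕ), Nat.div_pos (Nat.le_of_dvd hrpos (Nat.mem_divisors.mp d.2).1)
          (Nat.pos_of_mem_divisors d.2)⟩),
        hmk d⟩ with hidef
    have hinj : Function.Injective i := by
      intro a b hab
      apply Subtype.ext
      have := congrArg (fun x : (φ ⁻¹' {r}) => (((x : ℕ+ × ℕ+)).1 : ℕ)) hab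
      simpa [hidef] using this
    -- each image term dominates ofReal t
    have hlow : ∀ d : {d : ℕ // d ∈ (r : ℕ).divisors},
        ENNReal.ofReal t ≤ (fun p : ℕ+ × ℕ+ => h p.1 * h p.2) (↑(i d) : ℕ+ × ℕ+) := by
      intro d
      have hd : (d : ℕ) ∣ (r : ℕ) := (Nat.mem_divisors.mp d.2).1
      have hd0 : 0 < (d : ℕ) := Nat.pos_of_mem_divisors d.2
      have he0 : 0 < (r : ℕ) / (d : ℕ) := Nat.div_pos (Nat.le_of_dvd hrpos hd) hd0
      have hde : (d : ℕ) * ((r : ℕ) / (d : ℕ)) = (r : ℕ) := Nat.mul_div_cancel' hd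
      have hcast : ((d : ℕ) : ℝ) * (((r : ℕ) / (d : ℕ) : ℕ) : ℝ) = ((r : ℕ) : ℝ) := by
        rw [← Nat.cast_mul, hde]
      have hgcdpos : 0 < Nat.gcd g (d : ℕ) * Nat.gcd g ((r : ℕ) / (d : ℕ)) :=
        Nat.mul_pos (Nat.gcd_pos_of_pos_left _ hg) (Nat.gcd_pos_of_pos_left _ hg)
      have hdvd2 : Nat.gcd g (r : ℕ) ∣ Nat.gcd g (d : ℕ) * Nat.gcd g ((r : ℕ) / (d : ℕ)) := by
        conv_lhs => rw [← hde]
        exact gcd_mul_dvd_mul_gcd g (d : ℕ) ((r : ℕ) / (d : ℕ))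
      have hreal : t ≤ (Real.sqrt (Nat.gcd g (d : ℕ)) / ((d : ℕ) : ℝ) ^ (3/2 : ℝ)) *
          (Real.sqrt (Nat.gcd g ((r : ℕ) / (d : ℕ))) / ((((r : ℕ) / (d : ℕ) : ℕ)) : ℝ) ^ (3/2 : ℝ)) := by
        rw [div_mul_div_comm, ← Real.sqrt_mul (by positivity),
          ← Real.mul_rpow (by positivity) (by positivity), hcast, htdef]
        gcongr
        exact_mod_cast Nat.le_of_dvd hgcdpos hdvd2
      have heq : (fun p : ℕ+ × ℕ+ => h p.1 * h p.2) (↑(i d) : ℕ+ × ℕ+) =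
          ENNReal.ofReal ((Real.sqrt (Nat.gcd g (d : ℕ)) / ((d : ℕ) : ℝ) ^ (3/2 : ℝ)) *
            (Real.sqrt (Nat.gcd g ((r : ℕ) / (d : ℕ))) / ((((r : ℕ) / (d : ℕ) : ℕ)) : ℝ) ^ (3/2 : ℝ))) := by
        rw [hidef, hhdef]
        dsimp only
        rw [← ENNReal.ofReal_mul (by positivity)]
        rfl
      rw [heq]
      exact ENNReal.ofReal_le_ofReal hreal
    have hfr : ENNReal.ofReal (f r) = (2 ^ (r : ℕ).primeFactors.card : ℕ) • ENNReal.ofReal t := by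
      rw [nsmul_eq_mul, ← ENNReal.ofReal_natCast, ← ENNReal.ofReal_mul (by positivity), hfdef, htdef]
      congr 1
      push_cast
      rw [mul_div_assoc]
    rw [hfr]
    calc (2 ^ (r : ℕ).primeFactors.card : ℕ) • ENNReal.ofReal t
        ≤ ((r : ℕ).divisors.card : ℕ) • ENNReal.ofReal t := by
          rw [nsmul_eq_mul, nsmul_eq_mul]
          exact mul_le_mul_left (by
            exact_mod_cast two_pow_omega_le_card_divisors (r : ℕ) hrpos.ne') _
      _ = (Finset.univ : Finset {d : ℕ // d ∈ (r : ℕ).divisors}).card • ENNReal.ofReal t := by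
          rw [Finset.card_univ, Fintype.card_coe]
      _ ≤ ∑ d : {d : ℕ // d ∈ (r : ℕ).divisors},
            (fun p : ℕ+ × ℕ+ => h p.1 * h p.2) (↑(i d) : ℕ+ × ℕ+) :=
          Finset.card_nsmul_le_sum _ _ _ (fun d _ => hlow d)
      _ = ∑' d : {d : ℕ // d ∈ (r : ℕ).divisors},
            (fun p : ℕ+ × ℕ+ => h p.1 * h p.2) (↑(i d) : ℕ+ × ℕ+) := (tsum_fintype _).symm
      _ ≤ ∑' p : φ ⁻¹' {r}, (fun p : ℕ+ × ℕ+ => h p.1 * h p.2) (↑p : ℕ+ × ℕ+) :=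
          ENNReal.tsum_comp_le_tsum_of_injective hinj _
  -- Step 2 : the h-sum bound
  have key2 : ∑' a : ℕ+, h a ≤ ENNReal.ofReal (Z * (1 + Real.log g)) := by
    set c : ℕ → ℕ+ → ℝ≥0∞ := fun d a =>
      if d ∣ (a : ℕ) then ENNReal.ofReal (Real.sqrt d / ((a : ℕ) : ℝ) ^ (3/2 : ℝ)) else 0
      with hcdef
    have hpoint : ∀ a : ℕ+, h a ≤ ∑ d ∈ g.divisors, c d a := by
      intro a
      have hmem : Nat.gcd g (a : ℕ) ∈ g.divisors :=
        Nat.mem_divisors.mpr ⟨Nat.gcd_dvd_left _ _, hg.ne'⟩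
      have heq : h a = c (Nat.gcd g (a : ℕ)) a := by
        rw [hcdef, hhdef]; dsimp only; rw [if_pos (Nat.gcd_dvd_right g (a : ℕ))]
      rw [heq]
      exact Finset.single_le_sum (f := fun d => c d a) (fun d _ => zero_le) hmem
    have hinner : ∀ d ∈ g.divisors, ∑' a : ℕ+, c d a = ENNReal.ofReal (1 / (d : ℝ) * Z) := by
      intro d hd
      have hd0 : 0 < d := Nat.pos_of_mem_divisors hd
      have hd0' : (0 : ℝ) < (d : ℝ) := by exact_mod_cast hd0
      set dp : ℕ+ := ⟨d, hd0⟩ with hdpdef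
      have hinj : Function.Injective (fun b : ℕ+ => dp * b) := fun a b hab => by
        apply PNat.coe_injective
        have := congrArg (fun x : ℕ+ => (x : ℕ)) hab
        simp only [PNat.mul_coe] at this
        exact Nat.eq_of_mul_eq_mul_left hd0 this
      have hsupp : Function.support (c d) ⊆ Set.range (fun b : ℕ+ => dp * b) := by
        intro a ha
        rw [Function.mem_support] at ha
        by_cases hdvd : d ∣ (a : ℕ)
        · obtain ⟨k, hk⟩ := hdvd
          have hk0 : 0 < k := by
            rcases Nat.eq_zero_or_pos k with h0 | h0
            · subst h0
              rw [Nat.mul_zero] at hk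
              exact absurd hk a.pos.ne'
            · exact h0
          exact ⟨⟨k, hk0⟩, by apply PNat.coe_injective; exact (PNat.mul_coe dp _).trans hk.symm⟩
        · exact absurd (by rw [hcdef]; dsimp only; rw [if_neg hdvd]) ha
      rw [← hinj.tsum_eq hsupp]
      have heval : ∀ b : ℕ+, c d (dp * b) =
          ENNReal.ofReal (Real.sqrt d / (d : ℝ) ^ (3/2 : ℝ)) *
            ENNReal.ofReal (1 / ((b : ℕ) : ℝ) ^ (3/2 : ℝ)) := by
        intro b
        rw [hcdef]
        dsimp only
        rw [if_pos ⟨(b : ℕ), PNat.mul_coe dp b⟩,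
          ← ENNReal.ofReal_mul (by positivity)]
        congr 1
        have hbc : (((dp * b : ℕ+) : ℕ) : ℝ) = (d : ℝ) * ((b : ℕ) : ℝ) :=
          (congrArg (Nat.cast : ℕ → ℝ) (PNat.mul_coe dp b)).trans (Nat.cast_mul _ _)
        rw [hbc, Real.mul_rpow (by positivity) (by positivity)]
        field_simp
      simp_rw [heval]
      rw [ENNReal.tsum_mul_left,
        ← ENNReal.ofReal_tsum_of_nonneg (fun b => by positivity) hZsum,
        ← ENNReal.ofReal_mul (by positivity), ← hZdef]
      congr 1
      have hsd : Real.sqrt (d : ℝ) / (d : ℝ) ^ (3/2 : ℝ) = 1 / (d : ℝ) := by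
        have hexp : (1 : ℝ)/2 - 3/2 = -1 := by norm_num
        rw [Real.sqrt_eq_rpow, ← Real.rpow_sub hd0', hexp, Real.rpow_neg_one, one_div]
      rw [hsd]
    have hharm : ∑ d ∈ g.divisors, 1 / (d : ℝ) * Z ≤ Z * (1 + Real.log g) := by
      rw [← Finset.sum_mul, mul_comm]
      apply mul_le_mul_of_nonneg_left _ hZ0
      have h1 : ∑ d ∈ g.divisors, 1 / (d : ℝ) ≤ ∑ d ∈ Finset.Icc 1 g, 1 / (d : ℝ) :=
        Finset.sum_le_sum_of_subset_of_nonneg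
          (fun d hd => Finset.mem_Icc.mpr
            ⟨Nat.pos_of_mem_divisors hd, Nat.le_of_dvd hg (Nat.mem_divisors.mp hd).1⟩)
          (fun d _ _ => by positivity)
      have h2 : ∑ d ∈ Finset.Icc 1 g, 1 / (d : ℝ) = ((harmonic g : ℚ) : ℝ) := by
        rw [harmonic_eq_sum_Icc]
        push_cast
        simp [one_div]
      exact (h1.trans h2.le).trans (harmonic_le_one_add_log g)
    calc ∑' a : ℕ+, h a
        ≤ ∑' a : ℕ+, ∑ d ∈ g.divisors, c d a :=
          Summable.tsum_le_tsum hpoint ENNReal.summable ENNReal.summable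
      _ = ∑ d ∈ g.divisors, ∑' a : ℕ+, c d a := Summable.tsum_finsetSum (fun _ _ => ENNReal.summable)
      _ = ∑ d ∈ g.divisors, ENNReal.ofReal (1 / (d : ℝ) * Z) :=
          Finset.sum_congr rfl hinner
      _ = ENNReal.ofReal (∑ d ∈ g.divisors, 1 / (d : ℝ) * Z) :=
          (ENNReal.ofReal_sum_of_nonneg (fun d _ => by positivity)).symm
      _ ≤ ENNReal.ofReal (Z * (1 + Real.log g)) := ENNReal.ofReal_le_ofReal hharm
  -- combine
  have hZg0 : 0 ≤ Z * (1 + Real.log g) := by positivity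
  have main : ∑' r : ℕ+, ENNReal.ofReal (f r)
      ≤ ENNReal.ofReal ((Z * (1 + Real.log g)) ^ 2) := by
    calc ∑' r : ℕ+, ENNReal.ofReal (f r)
        ≤ ∑' r : ℕ+, ∑' p : φ ⁻¹' {r}, (fun p : ℕ+ × ℕ+ => h p.1 * h p.2) (↑p : ℕ+ × ℕ+) :=
          Summable.tsum_le_tsum key1 ENNReal.summable ENNReal.summable
      _ = ∑' p : ℕ+ × ℕ+, h p.1 * h p.2 :=
          ENNReal.tsum_fiberwise (fun p : ℕ+ × ℕ+ => h p.1 * h p.2) φ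
      _ = (∑' a : ℕ+, h a) * (∑' a : ℕ+, h a) := by
          rw [ENNReal.tsum_prod (f := fun a b : ℕ+ => h a * h b)]
          simp_rw [ENNReal.tsum_mul_left]
          rw [ENNReal.tsum_mul_right]
      _ ≤ ENNReal.ofReal (Z * (1 + Real.log g)) * ENNReal.ofReal (Z * (1 + Real.log g)) :=
          mul_le_mul' key2 key2
      _ = ENNReal.ofReal ((Z * (1 + Real.log g)) ^ 2) := by
          rw [← ENNReal.ofReal_mul hZg0, sq]
  -- bound the real constant
  set L : ℝ := Real.log (2 * (g : ℝ)) with hLdef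
  have hL2 : Real.log 2 ≤ L := by
    apply Real.log_le_log (by norm_num)
    nlinarith
  have hL0 : 0 < L := lt_of_lt_of_le hlog2 hL2
  have hLg : Real.log g ≤ L := by
    apply Real.log_le_log (by linarith)
    nlinarith
  have hfinal : (Z * (1 + Real.log g)) ^ 2 ≤ (B ^ 2 + 1) * L ^ 2 := by
    have h1 : (1 : ℝ) ≤ (Real.log 2)⁻¹ * L := by
      rw [← div_eq_inv_mul, le_div_iff₀ hlog2]
      linarith
    have h2 : Z * (1 + Real.log g) ≤ B * L := by
      rw [hBdef]
      have : 1 + Real.log g ≤ (1 + (Real.log 2)⁻¹) * L := by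
        have : (1 + (Real.log 2)⁻¹) * L = L + (Real.log 2)⁻¹ * L := by ring
        rw [this]
        linarith
      calc Z * (1 + Real.log g) ≤ Z * ((1 + (Real.log 2)⁻¹) * L) :=
            mul_le_mul_of_nonneg_left this hZ0
        _ = Z * (1 + (Real.log 2)⁻¹) * L := by ring
    have h3 : (Z * (1 + Real.log g)) ^ 2 ≤ (B * L) ^ 2 := by
      apply sq_le_sq' _ h2
      nlinarith
    calc (Z * (1 + Real.log g)) ^ 2 ≤ (B * L) ^ 2 := h3
      _ = B ^ 2 * L ^ 2 := by ring
      _ ≤ (B ^ 2 + 1) * L ^ 2 := by nlinarith [sq_nonneg L]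
  have main2 : ∑' r : ℕ+, ENNReal.ofReal (f r)
      ≤ ENNReal.ofReal ((B ^ 2 + 1) * L ^ 2) :=
    main.trans (ENNReal.ofReal_le_ofReal hfinal)
  -- convert back to ℝ
  have hC0 : 0 ≤ (B ^ 2 + 1) * L ^ 2 := by positivity
  set fn : ℕ+ → ℝ≥0 := fun r => Real.toNNReal (f r) with hfndef
  have hcoe : ∀ r, ((fn r : ℝ≥0) : ℝ≥0∞) = ENNReal.ofReal (f r) := fun r => rfl
  have hne : (∑' r : ℕ+, ((fn r : ℝ≥0) : ℝ≥0∞)) ≠ ⊤ := by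
    apply ne_top_of_le_ne_top ENNReal.ofReal_ne_top
    simp_rw [hcoe]
    exact main2
  have hsumfn : Summable fn := ENNReal.tsum_coe_ne_top_iff_summable.mp hne
  have hfn : (fun r : ℕ+ => ((fn r : ℝ≥0) : ℝ)) = f :=
    funext fun r => Real.coe_toNNReal _ (hf0 r)
  have hsumf : Summable f := hfn ▸ NNReal.summable_coe.mpr hsumfn
  have hlogcast : Real.log (2 * (Nat.gcd m n : ℝ)) = L := by rw [hLdef, hgdef]
  constructor
  · exact hsumf
  · have h1 : (∑' r : ℕ+, f r) = (((∑' r : ℕ+, fn r) : ℝ≥0) : ℝ) := by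
      rw [← hfn]
      exact (NNReal.coe_tsum).symm
    have h2 : (((∑' r : ℕ+, fn r) : ℝ≥0) : ℝ≥0∞) = ∑' r : ℕ+, ENNReal.ofReal (f r) := by
      rw [ENNReal.coe_tsum hsumfn]
      simp_rw [hcoe]
    have h3 : (∑' r : ℕ+, f r) ≤ (B ^ 2 + 1) * L ^ 2 := by
      rw [h1]
      have := ENNReal.toReal_mono ENNReal.ofReal_ne_top main2
      rwa [ENNReal.toReal_ofReal hC0, ← h2, ENNReal.coe_toReal] at this
    calc (∑' r : ℕ+, f r) ≤ (B ^ 2 + 1) * L ^ 2 := h3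
      _ = (B ^ 2 + 1) * Real.log (2 * (Nat.gcd m n : ℝ)) ^ 2 := by rw [hlogcast]
end

section
/- Let p be a prime and let λ : ℤ_{>0} → ℝ be a function satisfying λ(1) = 1, |λ(n)| ≤ τ(n) for all n ≥ 1, and the Hecke relation λ(m)·λ(n) = Σ_{d | gcd(m,n)} λ(m·n/d²) for all m, n ≥ 1. Fix a real number s > 1 and define real numbers c_r by c_0 := 1, c_1 := λ(p)/(1 + p^{−s}), and c_r := λ(p)·c_{r−1} − c_{r−2} for r ≥ 2. Then for every integer r ≥ 0 the series involved converge absolutely and Σ_{n ≥ 1} λ(n)·λ(n·p^r)·n^{−s} = c_r · Σ_{n ≥ 1} λ(n)²·n^{−s}. -/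
lemma quad_dvd (n d1 d2 : ℕ) (hn : n ≠ 0) (h1 : d1 ∣ n) (h2 : d2 ∣ n) :
    Nat.gcd d1 d2 * (d1 / Nat.gcd d1 d2) * (d2 / Nat.gcd d1 d2) ∣ n := by
  set g := Nat.gcd d1 d2 with hg
  have hd1 : d1 ≠ 0 := by rintro rfl; exact hn (Nat.zero_dvd.mp h1)
  have hgpos : 0 < g := Nat.gcd_pos_of_pos_left _ (Nat.pos_of_ne_zero hd1)
  have ha : g * (d1 / g) = d1 := Nat.mul_div_cancel' (Nat.gcd_dvd_left _ _)
  have hb : g * (d2 / g) = d2 := Nat.mul_div_cancel' (Nat.gcd_dvd_right _ _)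
  have hlcm : Nat.lcm d1 d2 ∣ n := Nat.lcm_dvd h1 h2
  have key : g * (g * (d1 / g) * (d2 / g)) = d1 * d2 := by
    calc g * (g * (d1 / g) * (d2 / g)) = (g * (d1 / g)) * (g * (d2 / g)) := by ring
      _ = d1 * d2 := by rw [ha, hb]
  have : Nat.lcm d1 d2 = g * (d1 / g) * (d2 / g) :=
    Nat.eq_of_mul_eq_mul_left hgpos (by rw [Nat.gcd_mul_lcm, key])
  rwa [← this]

open Finset in
lemma tau_sq_summable (s : ℝ) (hs : 1 < s) :
    Summable (fun n : ℕ => ((n.divisors.card : ℝ)) ^ 2 * (n : ℝ) ^ (-s)) := by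
  have hZsum : Summable (fun n : ℕ => (n : ℝ) ^ (-s)) := by
    rw [Real.summable_nat_rpow]; linarith
  set Z := ∑' n : ℕ, (n : ℝ) ^ (-s) with hZ
  have hnonneg : ∀ n : ℕ, (0:ℝ) ≤ (n : ℝ) ^ (-s) :=
    fun n => Real.rpow_nonneg (Nat.cast_nonneg n) _
  have hZ0 : (0:ℝ) ≤ Z := tsum_nonneg hnonneg
  have hZle : ∀ N : ℕ, ∑ k ∈ range N, (k : ℝ) ^ (-s) ≤ Z :=
    fun N => Summable.sum_le_tsum _ (fun k _ => hnonneg k) hZsum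
  apply summable_of_sum_range_le (c := Z ^ 4)
  · intro n; positivity
  intro N
  set F : ℕ × ℕ × ℕ × ℕ → ℝ :=
    fun q => (q.1 : ℝ) ^ (-s) * ((q.2.1 : ℝ) ^ (-s) * ((q.2.2.1 : ℝ) ^ (-s) * (q.2.2.2 : ℝ) ^ (-s))) with hF
  set φ : (Σ _n : ℕ, ℕ × ℕ) → ℕ × ℕ × ℕ × ℕ :=
    fun x => (Nat.gcd x.2.1 x.2.2, x.2.1 / Nat.gcd x.2.1 x.2.2, x.2.2 / Nat.gcd x.2.1 x.2.2,
      x.1 / (Nat.gcd x.2.1 x.2.2 * (x.2.1 / Nat.gcd x.2.1 x.2.2) * (x.2.2 / Nat.gcd x.2.1 x.2.2))) with hφ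
  set S : Finset (Σ _n : ℕ, ℕ × ℕ) := (range N).sigma (fun n => n.divisors ×ˢ n.divisors) with hS
  have hmem : ∀ x ∈ S, x.1 < N ∧ x.1 ≠ 0 ∧ x.2.1 ∣ x.1 ∧ x.2.2 ∣ x.1 := by
    rintro ⟨n, d1, d2⟩ hx
    rw [hS, mem_sigma, mem_range, mem_product, Nat.mem_divisors, Nat.mem_divisors] at hx
    exact ⟨hx.1, hx.2.1.2, hx.2.1.1, hx.2.2.1⟩
  have hprod : ∀ x ∈ S, (φ x).1 * (φ x).2.1 * (φ x).2.2.1 * (φ x).2.2.2 = x.1 := by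
    rintro ⟨n, d1, d2⟩ hx
    obtain ⟨_, hn, h1, h2⟩ := hmem _ hx
    exact Nat.mul_div_cancel' (quad_dvd n d1 d2 hn h1 h2)
  have hrec : ∀ x ∈ S, x = (⟨(φ x).1 * (φ x).2.1 * (φ x).2.2.1 * (φ x).2.2.2,
      ((φ x).1 * (φ x).2.1, (φ x).1 * (φ x).2.2.1)⟩ : Σ _n : ℕ, ℕ × ℕ) := by
    rintro ⟨n, d1, d2⟩ hx
    have hp := hprod _ hx
    have ha : Nat.gcd d1 d2 * (d1 / Nat.gcd d1 d2) = d1 :=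
      Nat.mul_div_cancel' (Nat.gcd_dvd_left _ _)
    have hb : Nat.gcd d1 d2 * (d2 / Nat.gcd d1 d2) = d2 :=
      Nat.mul_div_cancel' (Nat.gcd_dvd_right _ _)
    simp only [hφ] at hp ⊢
    exact Sigma.ext (by rw [hp]) (by rw [ha, hb])
  have hinj : ∀ x ∈ S, ∀ y ∈ S, φ x = φ y → x = y := by
    intro x hx y hy hxy
    rw [hrec x hx, hrec y hy, hxy]
  calc ∑ n ∈ range N, ((n.divisors.card : ℝ)) ^ 2 * (n : ℝ) ^ (-s)
      = ∑ n ∈ range N, ∑ _q ∈ n.divisors ×ˢ n.divisors, (n : ℝ) ^ (-s) := by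
        refine Finset.sum_congr rfl fun n _ => ?_
        rw [Finset.sum_const, Finset.card_product, nsmul_eq_mul]
        push_cast; ring
    _ = ∑ x ∈ S, (x.1 : ℝ) ^ (-s) := by rw [hS, Finset.sum_sigma]
    _ = ∑ x ∈ S, F (φ x) := by
        refine Finset.sum_congr rfl fun x hx => ?_
        have hp := hprod _ hx
        simp only [hF]
        conv_lhs => rw [← hp]
        push_cast
        rw [Real.mul_rpow (by positivity) (by positivity),
            Real.mul_rpow (by positivity) (by positivity),
            Real.mul_rpow (by positivity) (by positivity)]
        ring
    _ = ∑ y ∈ S.image φ, F y := (Finset.sum_image hinj).symm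
    _ ≤ ∑ y ∈ range N ×ˢ range N ×ˢ range N ×ˢ range N, F y := by
        apply Finset.sum_le_sum_of_subset_of_nonneg
        · intro y hy
          obtain ⟨x, hx, rfl⟩ := Finset.mem_image.mp hy
          obtain ⟨hN, hn, h1, h2⟩ := hmem _ hx
          have hp := hprod _ hx
          have hnn : 0 < x.1 := Nat.pos_of_ne_zero hn
          have l1 : (φ x).1 < N := lt_of_le_of_lt
            (Nat.le_of_dvd hnn ⟨(φ x).2.1 * (φ x).2.2.1 * (φ x).2.2.2, by rw [← hp]; ring⟩) hN
          have l2 : (φ x).2.1 < N := lt_of_le_of_lt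
            (Nat.le_of_dvd hnn ⟨(φ x).1 * (φ x).2.2.1 * (φ x).2.2.2, by rw [← hp]; ring⟩) hN
          have l3 : (φ x).2.2.1 < N := lt_of_le_of_lt
            (Nat.le_of_dvd hnn ⟨(φ x).1 * (φ x).2.1 * (φ x).2.2.2, by rw [← hp]; ring⟩) hN
          have l4 : (φ x).2.2.2 < N := lt_of_le_of_lt
            (Nat.le_of_dvd hnn ⟨(φ x).1 * (φ x).2.1 * (φ x).2.2.1, by rw [← hp]; ring⟩) hN
          simp [Finset.mem_product, mem_range, l1, l2, l3, l4]
        · intro y _ _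
          simp only [hF]; positivity
    _ = (∑ k ∈ range N, (k:ℝ)^(-s)) * ((∑ k ∈ range N, (k:ℝ)^(-s)) *
          ((∑ k ∈ range N, (k:ℝ)^(-s)) * (∑ k ∈ range N, (k:ℝ)^(-s)))) := by
        simp only [hF, Finset.sum_product, Finset.sum_mul, Finset.mul_sum]
        refine Finset.sum_congr rfl fun a _ => Finset.sum_congr rfl fun b _ =>
          Finset.sum_congr rfl fun c _ => Finset.sum_congr rfl fun d _ => by ring
    _ ≤ Z * (Z * (Z * Z)) := by
        have h := hZle N
        have h0 : (0:ℝ) ≤ ∑ k ∈ range N, (k:ℝ)^(-s) :=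
          Finset.sum_nonneg fun k _ => hnonneg k
        gcongr
    _ = Z ^ 4 := by ring


/-- Lemma 5, case `m′ = 1`: with the full Hecke relation,
`Σ λ(n)λ(np^r) n^{-s} = c_r Σ λ(n)² n^{-s}` where `c_r` satisfies the
three-term recurrence with `c_0 = 1`, `c_1 = λ(p)/(1+p^{-s})`. -/
theorem stmt_6 (p : ℕ) (hp : p.Prime) (lam : ℕ → ℝ)
    (h1 : lam 1 = 1)
    (hbound : ∀ n : ℕ, 1 ≤ n → |lam n| ≤ n.divisors.card)
    (hhecke : ∀ m n : ℕ, 1 ≤ m → 1 ≤ n →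
      lam m * lam n = ∑ d ∈ (Nat.gcd m n).divisors, lam (m * n / d ^ 2))
    (s : ℝ) (hs : 1 < s)
    (c : ℕ → ℝ) (hc0 : c 0 = 1) (hc1 : c 1 = lam p / (1 + (p : ℝ) ^ (-s)))
    (hcr : ∀ r : ℕ, 2 ≤ r → c r = lam p * c (r - 1) - c (r - 2)) :
    ∀ r : ℕ,
      Summable (fun n : ℕ => lam n * lam (n * p ^ r) * (n : ℝ) ^ (-s)) ∧
      Summable (fun n : ℕ => lam n ^ 2 * (n : ℝ) ^ (-s)) ∧
      (∑' n : ℕ, lam n * lam (n * p ^ r) * (n : ℝ) ^ (-s))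
        = c r * ∑' n : ℕ, lam n ^ 2 * (n : ℝ) ^ (-s) := by
  have hs0 : s ≠ 0 := by linarith
  have hns : -s ≠ 0 := neg_ne_zero.mpr hs0
  have hzero : (0:ℝ) ^ (-s) = 0 := Real.zero_rpow hns
  have hrp : ∀ n : ℕ, (0:ℝ) ≤ (n:ℝ) ^ (-s) := fun n => Real.rpow_nonneg (Nat.cast_nonneg n) _
  -- summability of the square series
  have hsq : Summable (fun n : ℕ => lam n ^ 2 * (n : ℝ) ^ (-s)) := by
    refine Summable.of_nonneg_of_le (fun n => by positivity) ?_ (tau_sq_summable s hs)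
    intro n
    rcases Nat.eq_zero_or_pos n with rfl | hn
    · simp [hzero]
    · have hb := hbound n hn
      have hb2 : lam n ^ 2 ≤ ((n.divisors.card : ℝ)) ^ 2 := by
        nlinarith [abs_nonneg (lam n), sq_abs (lam n)]
      exact mul_le_mul_of_nonneg_right hb2 (hrp n)
  -- summability of shifted square series
  have hshift : ∀ r : ℕ, Summable (fun n : ℕ => lam (n * p ^ r) ^ 2 * (n : ℝ) ^ (-s)) := by
    intro r
    have hppos : 0 < p ^ r := pow_pos hp.pos r
    have hinj : Function.Injective (fun n : ℕ => n * p ^ r) := fun a b h =>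
      Nat.eq_of_mul_eq_mul_right hppos h
    have h1' : Summable (fun n : ℕ => lam (n * p ^ r) ^ 2 * ((n * p ^ r : ℕ) : ℝ) ^ (-s)) :=
      hsq.comp_injective hinj
    refine (h1'.mul_left (((p:ℝ) ^ r) ^ s)).congr fun n => ?_
    have hx : (0:ℝ) < (p:ℝ) ^ r := pow_pos (by exact_mod_cast hp.pos) r
    have hone : ((p:ℝ) ^ r) ^ s * ((p:ℝ) ^ r) ^ (-s) = 1 := by
      rw [← Real.rpow_add hx, add_neg_cancel, Real.rpow_zero]
    have hcast : ((n * p ^ r : ℕ) : ℝ) ^ (-s) = (n:ℝ) ^ (-s) * ((p:ℝ) ^ r) ^ (-s) := by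
      rw [show ((n * p ^ r : ℕ) : ℝ) = (n:ℝ) * (p:ℝ) ^ r by push_cast; ring,
        Real.mul_rpow (Nat.cast_nonneg n) (le_of_lt hx)]
    rw [hcast]
    linear_combination (lam (n * p ^ r) ^ 2 * (n:ℝ) ^ (-s)) * hone
  -- summability of the main series
  have hfr : ∀ r : ℕ, Summable (fun n : ℕ => lam n * lam (n * p ^ r) * (n : ℝ) ^ (-s)) := by
    intro r
    refine Summable.of_abs (Summable.of_nonneg_of_le (fun n => abs_nonneg _) ?_
      ((hsq.add (hshift r)).mul_left (1/2 : ℝ)))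
    intro n
    rw [abs_mul, abs_of_nonneg (hrp n), abs_mul]
    have h2 : |lam n| * |lam (n * p ^ r)| ≤ 1/2 * (lam n ^ 2 + lam (n * p ^ r) ^ 2) := by
      nlinarith [sq_nonneg (|lam n| - |lam (n * p ^ r)|), sq_abs (lam n), sq_abs (lam (n * p ^ r))]
    nlinarith [mul_le_mul_of_nonneg_right h2 (hrp n), hrp n]
  -- S 0 equals the square series
  have hS0 : (∑' n : ℕ, lam n * lam (n * p ^ 0) * (n : ℝ) ^ (-s))
      = ∑' n : ℕ, lam n ^ 2 * (n : ℝ) ^ (-s) :=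
    tsum_congr fun n => by rw [pow_zero, mul_one, sq]
  -- three-term recurrence, termwise
  have hterm : ∀ (k n : ℕ), lam n * lam (n * p ^ (k+2)) * (n:ℝ) ^ (-s)
      = lam p * (lam n * lam (n * p ^ (k+1)) * (n:ℝ) ^ (-s))
        - lam n * lam (n * p ^ k) * (n:ℝ) ^ (-s) := by
    intro k n
    rcases Nat.eq_zero_or_pos n with rfl | hn
    · simp [hzero]
    have hnp : 1 ≤ n * p ^ (k+1) := Nat.one_le_iff_ne_zero.mpr
      (Nat.mul_ne_zero hn.ne' (pow_ne_zero _ hp.pos.ne'))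
    have h := hhecke p (n * p ^ (k+1)) hp.one_le hnp
    have hg : Nat.gcd p (n * p ^ (k+1)) = p := Nat.gcd_eq_left ⟨n * p ^ k, by ring⟩
    rw [hg, hp.divisors, Finset.sum_insert (by simp [hp.one_lt.ne]),
      Finset.sum_singleton] at h
    have e1 : p * (n * p ^ (k+1)) / 1 ^ 2 = n * p ^ (k+2) := by
      rw [one_pow, Nat.div_one]; ring
    have e2 : p * (n * p ^ (k+1)) / p ^ 2 = n * p ^ k := by
      rw [show p * (n * p ^ (k+1)) = n * p ^ k * p ^ 2 by ring]
      exact Nat.mul_div_cancel _ (pow_pos hp.pos 2)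
    rw [e1, e2] at h
    linear_combination (-(lam n * (n:ℝ) ^ (-s))) * h
  -- tsum-level recurrence
  have hstep2 : ∀ k : ℕ, (∑' n : ℕ, lam n * lam (n * p ^ (k+2)) * (n : ℝ) ^ (-s))
      = lam p * (∑' n : ℕ, lam n * lam (n * p ^ (k+1)) * (n : ℝ) ^ (-s))
        - ∑' n : ℕ, lam n * lam (n * p ^ k) * (n : ℝ) ^ (-s) := by
    intro k
    rw [tsum_congr (hterm k)]
    rw [Summable.tsum_sub ((hfr (k+1)).mul_left (lam p)) (hfr k), tsum_mul_left]
  -- the r = 1 step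
  have hstep1 : (∑' n : ℕ, lam n * lam (n * p ^ 1) * (n : ℝ) ^ (-s))
      = c 1 * ∑' n : ℕ, lam n * lam (n * p ^ 0) * (n : ℝ) ^ (-s) := by
    set g : ℕ → ℝ := fun n => if p ∣ n then lam n * lam (n / p) * (n:ℝ) ^ (-s) else 0 with hgdef
    have hterm0 : ∀ n : ℕ, lam p * (lam n * lam (n * p ^ 0) * (n:ℝ) ^ (-s))
        = lam n * lam (n * p ^ 1) * (n:ℝ) ^ (-s) + g n := by
      intro n
      rcases Nat.eq_zero_or_pos n with rfl | hn
      · simp [hgdef, hzero]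
      have h := hhecke p n hp.one_le hn
      by_cases hdvd : p ∣ n
      · have hg : Nat.gcd p n = p := Nat.gcd_eq_left hdvd
        rw [hg, hp.divisors, Finset.sum_insert (by simp [hp.one_lt.ne]),
          Finset.sum_singleton] at h
        obtain ⟨m, rfl⟩ := hdvd
        have e1 : p * (p * m) / 1 ^ 2 = (p * m) * p ^ 1 := by
          rw [one_pow, Nat.div_one]; ring
        have e2 : p * (p * m) / p ^ 2 = (p * m) / p := by
          rw [show p * (p * m) = m * p ^ 2 by ring, Nat.mul_div_cancel _ (pow_pos hp.pos 2),
            Nat.mul_div_cancel_left m hp.pos]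
        rw [e1, e2] at h
        simp only [hgdef, if_pos (Dvd.intro m rfl), pow_zero, mul_one]
        linear_combination (lam (p * m) * ((p * m : ℕ):ℝ) ^ (-s)) * h
      · have hg : Nat.gcd p n = 1 := (Nat.Prime.coprime_iff_not_dvd hp).mpr hdvd
        rw [hg, Nat.divisors_one, Finset.sum_singleton] at h
        have e1 : p * n / 1 ^ 2 = n * p ^ 1 := by rw [one_pow, Nat.div_one]; ring
        rw [e1] at h
        simp only [hgdef, if_neg hdvd, pow_zero, mul_one, add_zero]
        linear_combination (lam n * (n:ℝ) ^ (-s)) * h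
    -- summability of g
    have hgsum : Summable g := by
      refine (((hfr 0).mul_left (lam p)).sub (hfr 1)).congr fun n => ?_
      linear_combination (hterm0 n)
    -- reindex the g-sum
    have hreindex : (∑' n : ℕ, g n) = ∑' m : ℕ, g (p * m) := by
      refine (Function.Injective.tsum_eq (g := fun m : ℕ => p * m)
        (fun a b h => Nat.eq_of_mul_eq_mul_left hp.pos h) ?_).symm
      intro n hn
      rcases (em (p ∣ n)) with ⟨m, rfl⟩ | hnd
      · exact ⟨m, rfl⟩
      · exact absurd (by simp [hgdef, hnd]) hn
    have hgp : ∀ m : ℕ, g (p * m) = (p:ℝ) ^ (-s) * (lam m * lam (m * p ^ 1) * (m:ℝ) ^ (-s)) := by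
      intro m
      rcases Nat.eq_zero_or_pos m with rfl | hm
      · simp [hgdef, hzero]
      have hc : ((p * m : ℕ) : ℝ) ^ (-s) = (p:ℝ) ^ (-s) * (m:ℝ) ^ (-s) := by
        rw [show ((p * m : ℕ) : ℝ) = (p:ℝ) * (m:ℝ) by push_cast; ring,
          Real.mul_rpow (Nat.cast_nonneg p) (Nat.cast_nonneg m)]
      simp only [hgdef, if_pos (Dvd.intro m rfl), Nat.mul_div_cancel_left m hp.pos, hc,
        show m * p ^ 1 = p * m by ring]
      ring
    have hsum_g : (∑' n : ℕ, g n)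
        = (p:ℝ) ^ (-s) * ∑' n : ℕ, lam n * lam (n * p ^ 1) * (n : ℝ) ^ (-s) := by
      rw [hreindex, tsum_congr hgp, tsum_mul_left]
    have hsum_g' : (∑' n : ℕ, g n)
        = lam p * (∑' n : ℕ, lam n * lam (n * p ^ 0) * (n : ℝ) ^ (-s))
          - ∑' n : ℕ, lam n * lam (n * p ^ 1) * (n : ℝ) ^ (-s) := by
      rw [tsum_congr (fun n => show g n
        = lam p * (lam n * lam (n * p ^ 0) * (n:ℝ) ^ (-s))
          - lam n * lam (n * p ^ 1) * (n:ℝ) ^ (-s) by linear_combination -(hterm0 n))]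
      rw [Summable.tsum_sub ((hfr 0).mul_left (lam p)) (hfr 1), tsum_mul_left]
    have hden : (0:ℝ) < 1 + (p:ℝ) ^ (-s) := by positivity
    rw [hc1]
    have hthis := hsum_g.symm.trans hsum_g'
    field_simp
    simp only [pow_one, pow_zero, mul_one] at hthis ⊢
    linear_combination hthis
  -- main induction
  have main : ∀ r : ℕ,
      (∑' n : ℕ, lam n * lam (n * p ^ r) * (n : ℝ) ^ (-s))
        = c r * ∑' n : ℕ, lam n * lam (n * p ^ 0) * (n : ℝ) ^ (-s) ∧
      (∑' n : ℕ, lam n * lam (n * p ^ (r+1)) * (n : ℝ) ^ (-s))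
        = c (r+1) * ∑' n : ℕ, lam n * lam (n * p ^ 0) * (n : ℝ) ^ (-s) := by
    intro r
    induction r with
    | zero => exact ⟨by rw [hc0, one_mul], hstep1⟩
    | succ k ih =>
      refine ⟨ih.2, ?_⟩
      have hrec := hcr (k+2) (by omega)
      rw [show k+2-1 = k+1 by omega, show k+2-2 = k by omega] at hrec
      show (∑' n : ℕ, lam n * lam (n * p ^ (k+2)) * (n : ℝ) ^ (-s)) = _
      rw [hstep2 k, ih.1, ih.2]
      show _ = c (k+2) * _
      rw [hrec]; ring
  intro r
  exact ⟨hfr r, hsq, by rw [(main r).1, hS0]⟩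
end

section
/- Let p be a prime, s > 0 a real number, and (a_k)_{k ≥ 0} a sequence of real numbers with a_0 = 1, |a_k| ≤ k + 1 for all k ≥ 0, and a_{k+1} = a_1·a_k − a_{k−1} for all k ≥ 1. For each integer r ≥ 0 set R_r := Σ_{k ≥ 0} a_k · a_{k+r} · p^{−ks} (an absolutely convergent series). Then R_1 = (a_1/(1 + p^{−s}))·R_0, and R_r = a_1·R_{r−1} − R_{r−2} for every r ≥ 2. -/
/-- Recurrences for the local sums `R_r = Σ_k a_k a_{k+r} p^{-ks}` attached to a
sequence satisfying the Hecke three-term recurrence and the Deligne bound. -/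
theorem stmt_7 (p : ℕ) (hp : p.Prime) (s : ℝ) (hs : 0 < s) (a : ℕ → ℝ)
    (ha0 : a 0 = 1) (hbd : ∀ k : ℕ, |a k| ≤ k + 1)
    (hrec : ∀ k : ℕ, 1 ≤ k → a (k + 1) = a 1 * a k - a (k - 1)) :
    (∀ r : ℕ, Summable (fun k : ℕ => a k * a (k + r) * (p : ℝ) ^ (-(k : ℝ) * s))) ∧
    (∑' k : ℕ, a k * a (k + 1) * (p : ℝ) ^ (-(k : ℝ) * s))
      = a 1 / (1 + (p : ℝ) ^ (-s)) * ∑' k : ℕ, a k * a k * (p : ℝ) ^ (-(k : ℝ) * s) ∧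
    ∀ r : ℕ, 2 ≤ r →
      (∑' k : ℕ, a k * a (k + r) * (p : ℝ) ^ (-(k : ℝ) * s))
        = a 1 * (∑' k : ℕ, a k * a (k + (r - 1)) * (p : ℝ) ^ (-(k : ℝ) * s))
          - ∑' k : ℕ, a k * a (k + (r - 2)) * (p : ℝ) ^ (-(k : ℝ) * s) := by
  have hp1 : (1 : ℝ) < p := by exact_mod_cast hp.one_lt
  set q : ℝ := (p : ℝ) ^ (-s) with hqdef
  have hq0 : 0 < q := Real.rpow_pos_of_pos (by linarith) _
  have hq1 : q < 1 := Real.rpow_lt_one_of_one_lt_of_neg hp1 (by linarith)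
  have hpow : ∀ k : ℕ, (p : ℝ) ^ (-(k : ℝ) * s) = q ^ k := by
    intro k
    rw [hqdef, ← Real.rpow_natCast ((p : ℝ) ^ (-s)) k,
      ← Real.rpow_mul (by positivity)]
    ring_nf
  simp only [hpow]
  -- geometric-type summability
  have hgeom : Summable (fun k : ℕ => ((k : ℝ) + 1) ^ 2 * q ^ k) := by
    have hn : ‖q‖ < 1 := by rw [Real.norm_eq_abs, abs_of_pos hq0]; exact hq1
    have h2 := summable_pow_mul_geometric_of_norm_lt_one (R := ℝ) 2 hn
    have h1 := summable_pow_mul_geometric_of_norm_lt_one (R := ℝ) 1 hn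
    have h0 := summable_geometric_of_lt_one hq0.le hq1
    refine (h2.add ((h1.mul_left 2).add h0)).congr fun k => ?_
    ring
  have hsum : ∀ r : ℕ, Summable (fun k : ℕ => a k * a (k + r) * q ^ k) := by
    intro r
    apply Summable.of_norm
    refine Summable.of_nonneg_of_le (fun k => norm_nonneg _) ?_
      (hgeom.mul_left ((r : ℝ) + 1))
    intro k
    have hqk : (0:ℝ) ≤ q ^ k := (pow_pos hq0 k).le
    have h1 : |a k| ≤ (k : ℝ) + 1 := hbd k
    have h2 : |a (k + r)| ≤ (k : ℝ) + (r : ℝ) + 1 := by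
      have := hbd (k + r); push_cast at this; linarith
    have hnorm : ‖a k * a (k + r) * q ^ k‖ = |a k| * |a (k + r)| * q ^ k := by
      rw [Real.norm_eq_abs, abs_mul, abs_mul, abs_of_nonneg hqk]
    rw [hnorm]
    have hprod : |a k| * |a (k + r)| ≤ ((r : ℝ) + 1) * ((k : ℝ) + 1) ^ 2 := by
      have hb : |a k| * |a (k + r)| ≤ ((k : ℝ) + 1) * ((k : ℝ) + (r : ℝ) + 1) :=
        mul_le_mul h1 h2 (abs_nonneg _) (by positivity)
      nlinarith [abs_nonneg (a k), abs_nonneg (a (k + r)), Nat.cast_nonneg (α := ℝ) k,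
        Nat.cast_nonneg (α := ℝ) r,
        mul_nonneg (mul_nonneg (Nat.cast_nonneg (α := ℝ) r) (Nat.cast_nonneg (α := ℝ) k))
          (Nat.cast_nonneg (α := ℝ) k),
        mul_nonneg (Nat.cast_nonneg (α := ℝ) r) (Nat.cast_nonneg (α := ℝ) k)]
    calc |a k| * |a (k + r)| * q ^ k
        ≤ ((r : ℝ) + 1) * ((k : ℝ) + 1) ^ 2 * q ^ k :=
          mul_le_mul_of_nonneg_right hprod hqk
      _ = ((r : ℝ) + 1) * (((k : ℝ) + 1) ^ 2 * q ^ k) := by ring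
  refine ⟨hsum, ?_, ?_⟩
  · -- R₁ = a₁/(1+q) · R₀
    have hs0 : Summable (fun k : ℕ => a k * a k * q ^ k) := by simpa using hsum 0
    have hf : Summable (fun k : ℕ =>
        a 1 * (a k * a k * q ^ k) - a k * a (k + 1) * q ^ k) :=
      (hs0.mul_left (a 1)).sub (hsum 1)
    have key : a 1 * (∑' k : ℕ, a k * a k * q ^ k)
        - (∑' k : ℕ, a k * a (k + 1) * q ^ k)
        = q * ∑' k : ℕ, a k * a (k + 1) * q ^ k := by
      rw [← tsum_mul_left, ← Summable.tsum_sub (hs0.mul_left (a 1)) (hsum 1)]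
      rw [Summable.tsum_eq_zero_add hf]
      have h0 : a 1 * (a 0 * a 0 * q ^ 0) - a 0 * a (0 + 1) * q ^ 0 = 0 := by
        simp [ha0]
      rw [h0, zero_add]
      rw [← tsum_mul_left]
      refine tsum_congr fun k => ?_
      have h := hrec (k + 1) (by omega)
      simp only [Nat.add_sub_cancel] at h
      rw [h, pow_succ]
      ring
    have hne : (1 : ℝ) + q ≠ 0 := by positivity
    field_simp
    simp only [sq]; linarith [key]
  · -- three-term recurrence for r ≥ 2
    intro r hr
    have e : ∀ k : ℕ, a k * a (k + r) * q ^ k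
        = a 1 * (a k * a (k + (r - 1)) * q ^ k) - a k * a (k + (r - 2)) * q ^ k := by
      intro k
      have h := hrec (k + (r - 1)) (by omega)
      have e1 : k + (r - 1) + 1 = k + r := by omega
      have e2 : k + (r - 1) - 1 = k + (r - 2) := by omega
      rw [e1, e2] at h
      rw [h]; ring
    rw [tsum_congr e, Summable.tsum_sub (((hsum (r - 1)).mul_left (a 1))) (hsum (r - 2)),
      tsum_mul_left]
end

section
/- Let k ≥ 2 be an even integer and G an even polynomial with real coefficients of degree ≥ 2 satisfying G(0) = 1 and G(−1) = G(−2) = 0, and let T be the associated contour integral. Then there exists a constant C > 0, depending only on k and G, such that |T(y) − 1| ≤ C·y for all real y with 0 < y ≤ 1. -/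
open Complex in
/-- `T(y) = (1/2πi) ∫_{(2)} (Γ(s+k/2)/Γ(k/2)) G(s) y^{-s} ds/s`,
written as an integral over the vertical line `s = 2 + it`. -/
noncomputable def Tint (k : ℕ) (G : Polynomial ℝ) (y : ℝ) : ℂ :=
  (1 / (2 * Real.pi) : ℂ) * ∫ t : ℝ,
    Complex.Gamma ((2 + (t : ℂ) * Complex.I) + (k : ℂ) / 2) / Complex.Gamma ((k : ℂ) / 2) *
      Polynomial.aeval (2 + (t : ℂ) * Complex.I) G *
      (y : ℂ) ^ (-(2 + (t : ℂ) * Complex.I)) / (2 + (t : ℂ) * Complex.I)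

open Complex MeasureTheory Set Polynomial Finset

theorem pow_mul_exp_eq (m : ℕ) {s : ℂ} {t : ℝ} (ht : 0 < t) :
    (t : ℂ) ^ (s - 1) • ((t : ℂ) ^ m * Real.exp (-t)) =
      Real.exp (-t) * (t : ℂ) ^ (s + m - 1) := by
  have ht0 : (t : ℂ) ≠ 0 := Complex.ofReal_ne_zero.mpr (ne_of_gt ht)
  have h : (t : ℂ) ^ (s - 1) * (t : ℂ) ^ m = (t : ℂ) ^ (s + m - 1) := by
    rw [← Complex.cpow_natCast (t : ℂ) m, ← Complex.cpow_add _ _ ht0]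
    congr 1; ring
  rw [smul_eq_mul, ← mul_assoc, h, mul_comm]

/-- Mellin transform of `u^m e^{-u}` is `Γ(s+m)`. -/
theorem mellin_monomial (m : ℕ) {s : ℂ} (hs : 0 < s.re) :
    mellin (fun u : ℝ => (u : ℂ) ^ m * Real.exp (-u)) s = Complex.Gamma (s + m) := by
  rw [Complex.Gamma_eq_integral (by simp [Complex.add_re]; positivity), Complex.GammaIntegral,
    mellin]
  exact setIntegral_congr_fun measurableSet_Ioi fun t ht => pow_mul_exp_eq m ht

theorem mellin_monomial_conv (m : ℕ) {s : ℂ} (hs : 0 < s.re) :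
    MellinConvergent (fun u : ℝ => (u : ℂ) ^ m * Real.exp (-u)) s := by
  have h := Complex.GammaIntegral_convergent (s := s + m)
    (by simp [Complex.add_re]; positivity)
  exact (integrableOn_congr_fun (fun t (ht : t ∈ Set.Ioi (0:ℝ)) => pow_mul_exp_eq m ht) measurableSet_Ioi).mpr h

open Complex MeasureTheory Set

theorem norm_Gamma_le {z : ℂ} (hz : 0 < z.re) : ‖Complex.Gamma z‖ ≤ Real.Gamma z.re := by
  rw [Complex.Gamma_eq_integral hz, Complex.GammaIntegral,
    Real.Gamma_eq_integral hz]
  refine (norm_integral_le_integral_norm _).trans ?_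
  refine le_of_eq (setIntegral_congr_fun measurableSet_Ioi fun t ht => ?_)
  rw [norm_mul, Complex.norm_real, Real.norm_eq_abs,
    Complex.norm_cpow_eq_rpow_re_of_pos ht]
  simp [_root_.abs_of_nonneg (Real.exp_nonneg _), Complex.sub_re]

theorem integrable_Gamma_vertical (c : ℝ) (hc : 1 ≤ c) :
    Integrable (fun t : ℝ => Complex.Gamma ((c : ℂ) + t * I)) := by
  have hmeas : AEStronglyMeasurable (fun t : ℝ => Complex.Gamma ((c : ℂ) + t * I)) volume := by
    refine (continuous_iff_continuousAt.mpr fun t => ?_).aestronglyMeasurable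
    refine (Complex.differentiableAt_Gamma _ fun m => ?_).continuousAt.comp (by fun_prop)
    intro h
    have := congrArg Complex.re h
    simp at this
    nlinarith [this]
  refine Integrable.mono' ((integrable_inv_one_add_sq).const_mul (Real.Gamma (c + 2))) hmeas
    (Filter.Eventually.of_forall fun t => ?_)
  have h1 : ((c : ℂ) + t * I) ≠ 0 := by
    intro h
    have := congrArg Complex.re h
    simp at this; linarith
  have h2 : ((c : ℂ) + t * I) + 1 ≠ 0 := by
    intro h
    have := congrArg Complex.re h
    simp at this; linarith
  have key : Complex.Gamma ((c : ℂ) + t * I + 2) =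
      ((c : ℂ) + t * I + 1) * (((c : ℂ) + t * I) * Complex.Gamma ((c : ℂ) + t * I)) := by
    rw [show (c : ℂ) + t * I + 2 = ((c : ℂ) + t * I + 1) + 1 by ring,
      Complex.Gamma_add_one _ h2, Complex.Gamma_add_one _ h1]
  have hnorm : ‖Complex.Gamma ((c : ℂ) + t * I + 2)‖ ≤ Real.Gamma (c + 2) := by
    have := norm_Gamma_le (z := (c : ℂ) + t * I + 2) (by simp; linarith)
    simpa using this
  rw [key] at hnorm
  rw [norm_mul, norm_mul] at hnorm
  have ht2 : (0:ℝ) < 1 + t ^ 2 := by positivity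
  have e1 : Real.sqrt (1 + t ^ 2) ≤ ‖(c : ℂ) + t * I‖ := by
    rw [Complex.norm_def]
    apply Real.sqrt_le_sqrt
    simp [Complex.normSq_apply]
    nlinarith
  have e2 : Real.sqrt (1 + t ^ 2) ≤ ‖(c : ℂ) + t * I + 1‖ := by
    rw [Complex.norm_def]
    apply Real.sqrt_le_sqrt
    simp [Complex.normSq_apply]
    nlinarith
  have hb1 : (1 + t ^ 2 : ℝ) ≤ ‖(c : ℂ) + t * I + 1‖ * ‖(c : ℂ) + t * I‖ := by
    have := Real.mul_self_sqrt (le_of_lt ht2)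
    nlinarith [Real.sqrt_nonneg (1 + t ^ 2), norm_nonneg ((c : ℂ) + t * I)]
  rw [← div_eq_mul_inv, le_div_iff₀ ht2]
  nlinarith [norm_nonneg (Complex.Gamma ((c : ℂ) + t * I)),
    mul_le_mul_of_nonneg_right hb1 (norm_nonneg (Complex.Gamma ((c : ℂ) + t * I)))]

open Complex MeasureTheory Set Polynomial Finset

theorem aeval_ascPochhammer_Gamma (a d : ℕ) (s : ℂ) (hs : 0 < s.re) :
    Polynomial.aeval (s + a) (ascPochhammer ℝ d) * Complex.Gamma (s + a) =
      Complex.Gamma (s + (a + d : ℕ)) := by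
  induction d with
  | zero => simp [ascPochhammer_zero]
  | succ d ih =>
    have hne : s + (a + d : ℕ) ≠ 0 := by
      intro h
      have := congrArg Complex.re h
      simp [Complex.add_re] at this
      have : (0:ℝ) ≤ (a:ℝ) + d := by positivity
      linarith
    rw [ascPochhammer_succ_right, map_mul, show ((d : ℝ[X]) : ℝ[X]) = C (d:ℝ) by
      simp [Polynomial.C_eq_natCast], map_add, aeval_X, aeval_C]
    have step : Complex.Gamma (s + (a + (d+1) : ℕ)) = (s + (a + d : ℕ)) *
        Complex.Gamma (s + (a + d : ℕ)) := by
      rw [← Complex.Gamma_add_one _ hne]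
      congr 1
      push_cast
      ring
    rw [step, ← ih]
    have : (algebraMap ℝ ℂ) (d:ℝ) = (d:ℂ) := by simp
    rw [this]
    push_cast
    ring

theorem gamma_factorial_sum (a : ℕ) (s : ℂ) (hs : 0 < s.re) :
    Complex.Gamma (s + (a + 1 : ℕ)) = s * (a.factorial : ℂ) *
      ∑ m ∈ Finset.range (a + 1), ((m.factorial : ℂ))⁻¹ * Complex.Gamma (s + m) := by
  have hsne : s ≠ 0 := by
    intro h; rw [h] at hs; simp at hs
  induction a with
  | zero =>
    simp only [Finset.sum_range_one, Nat.factorial_zero, Nat.cast_one, inv_one, one_mul,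
      Nat.cast_zero, add_zero, mul_one]
    rw [show ((0:ℕ) + 1 : ℕ) = 1 by norm_num]
    rw [show s + (1:ℕ) = s + 1 by push_cast; ring, Complex.Gamma_add_one _ hsne]
    rw [Finset.sum_range_one]
    simp
  | succ a ih =>
    have hne : s + (a + 1 : ℕ) ≠ 0 := by
      intro h
      have := congrArg Complex.re h
      simp [Complex.add_re] at this
      have : (0:ℝ) ≤ (a:ℝ) + 1 := by positivity
      linarith
    have step : Complex.Gamma (s + (a + 1 + 1 : ℕ)) = (s + (a + 1 : ℕ)) *
        Complex.Gamma (s + (a + 1 : ℕ)) := by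
      rw [← Complex.Gamma_add_one _ hne]
      congr 1
      push_cast
      ring
    rw [step, Finset.sum_range_succ]
    have hfne : (((a+1).factorial : ℂ)) ≠ 0 := Nat.cast_ne_zero.mpr (Nat.factorial_ne_zero _)
    have hf : (((a+1).factorial : ℂ)) = ((a:ℂ) + 1) * (a.factorial : ℂ) := by
      push_cast [Nat.factorial_succ]
      ring
    have key : s * (((a+1).factorial : ℂ)) * ((((a+1).factorial : ℂ))⁻¹ *
        Complex.Gamma (s + ((a+1 : ℕ) : ℂ))) = s * Complex.Gamma (s + ((a+1 : ℕ) : ℂ)) := by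
      field_simp
    rw [mul_add, key, ih, hf]
    push_cast
    ring

theorem poly_gamma_expand (a : ℕ) : ∀ (N : ℕ) (P : Polynomial ℝ), P.natDegree ≤ N →
    ∃ c : ℕ → ℝ, ∀ s : ℂ, 0 < s.re →
      (Polynomial.aeval s P) * Complex.Gamma (s + a) =
        ∑ j ∈ Finset.range (N + 1), (c j : ℂ) * Complex.Gamma (s + (a + j : ℕ)) := by
  intro N
  induction N with
  | zero =>
    intro P hP
    refine ⟨fun _ => P.coeff 0, fun s hs => ?_⟩
    rw [Polynomial.eq_C_of_natDegree_le_zero hP]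
    simp
  | succ N ihN =>
    intro P hP
    set A : Polynomial ℝ := (ascPochhammer ℝ (N+1)).comp (X + C (a:ℝ)) with hA
    have hAmonic : A.Monic := (monic_ascPochhammer ℝ (N+1)).comp_X_add_C _
    have hAdeg : A.natDegree = N + 1 := by
      rw [hA, Polynomial.natDegree_comp, ascPochhammer_natDegree, natDegree_X_add_C, mul_one]
    set Q : Polynomial ℝ := P - C (P.coeff (N+1)) * A with hQ
    have hQdeg : Q.natDegree ≤ N := by
      rw [Polynomial.natDegree_le_iff_coeff_eq_zero]
      intro M hM
      rw [hQ, Polynomial.coeff_sub, Polynomial.coeff_C_mul]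
      rcases eq_or_lt_of_le (Nat.succ_le_of_lt hM) with h | h
      · rw [← h]
        have : A.coeff (N+1) = 1 := by
          have := hAmonic.leadingCoeff
          rwa [Polynomial.leadingCoeff, hAdeg] at this
        rw [this, mul_one, sub_self]
      · have h1 : P.coeff M = 0 := Polynomial.coeff_eq_zero_of_natDegree_lt (lt_of_le_of_lt hP h)
        have h2 : A.coeff M = 0 := Polynomial.coeff_eq_zero_of_natDegree_lt (by omega)
        rw [h1, h2, mul_zero, sub_zero]
    obtain ⟨c, hc⟩ := ihN Q hQdeg
    refine ⟨fun j => if j = N+1 then P.coeff (N+1) else c j, fun s hs => ?_⟩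
    have hPQ : Polynomial.aeval s P = Polynomial.aeval s Q
        + (P.coeff (N+1) : ℂ) * Polynomial.aeval s A := by
      rw [hQ]
      simp only [map_sub, map_mul, Polynomial.aeval_C]
      simp
    have hAval : Polynomial.aeval s A = Polynomial.aeval (s + a) (ascPochhammer ℝ (N+1)) := by
      rw [hA, Polynomial.aeval_comp]
      simp
    rw [hPQ, add_mul, hc s hs, hAval, mul_assoc, aeval_ascPochhammer_Gamma a (N+1) s hs]
    conv_rhs => rw [Finset.sum_range_succ]
    simp only [if_pos rfl]
    congr 1
    exact Finset.sum_congr rfl fun j hj => by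
      rw [if_neg (Nat.ne_of_lt (Finset.mem_range.mp hj))]

theorem master (a : ℕ) (ha : 1 ≤ a) (G : Polynomial ℝ) (h0 : G.eval 0 = 1) :
    ∃ n, ∃ b : ℕ → ℝ, b 0 = 1 ∧ ∀ s : ℂ, 0 < s.re →
      Complex.Gamma (s + a) * (Polynomial.aeval s G) / (Complex.Gamma (a : ℂ) * s) =
        ∑ m ∈ Finset.range (n + 1), (b m : ℂ) * Complex.Gamma (s + m) := by
  obtain ⟨H, hH⟩ : (X : Polynomial ℝ) ∣ G - C 1 := by
    rw [Polynomial.X_dvd_iff]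
    rw [Polynomial.coeff_sub, Polynomial.coeff_zero_eq_eval_zero, h0]
    simp
  obtain ⟨c, hc⟩ := poly_gamma_expand a H.natDegree H le_rfl
  set n0 := H.natDegree with hn0
  set f : ℝ := ((a-1).factorial : ℝ) with hf
  have hfne : f ≠ 0 := Nat.cast_ne_zero.mpr (Nat.factorial_ne_zero _)
  have hΓ : Complex.Gamma ((a : ℕ) : ℂ) = (f : ℂ) := by
    have h1 : ((a : ℕ) : ℂ) = ((a - 1 : ℕ) : ℂ) + 1 := by
      have : a - 1 + 1 = a := Nat.succ_pred_eq_of_pos ha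
      rw [← this]
      push_cast
      ring
    rw [h1, Complex.Gamma_nat_eq_factorial]
    norm_num [hf]
  set b : ℕ → ℝ := fun m =>
    (if m < a then (1 / m.factorial : ℝ) else 0) + (if a ≤ m then c (m - a) / f else 0) with hb
  refine ⟨a + n0, b, ?_, fun s hs => ?_⟩
  · simp [hb, Nat.lt_of_lt_of_le Nat.zero_lt_one ha, Nat.not_succ_le_zero]
    intro h
    omega
  have hs0 : s ≠ 0 := by intro h; rw [h] at hs; simp at hs
  have hG : Polynomial.aeval s G = 1 + s * Polynomial.aeval s H := by
    have h' := congrArg (Polynomial.aeval s) hH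
    simp only [map_sub, map_mul, Polynomial.aeval_C, Polynomial.aeval_X, map_one] at h'
    linear_combination h'
  have hsum : Complex.Gamma (s + (a : ℕ)) = s * (f : ℂ) *
      ∑ m ∈ Finset.range a, ((m.factorial : ℂ))⁻¹ * Complex.Gamma (s + m) := by
    have h' := gamma_factorial_sum (a - 1) s hs
    have ha1 : a - 1 + 1 = a := by omega
    rw [ha1] at h'
    rw [h']
    norm_cast
  have hsplit : ∑ m ∈ Finset.range (a + n0 + 1), (b m : ℂ) * Complex.Gamma (s + m) =
      (∑ m ∈ Finset.range a, ((1 / m.factorial : ℝ) : ℂ) * Complex.Gamma (s + m)) +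
      ∑ j ∈ Finset.range (n0 + 1), ((c j / f : ℝ) : ℂ) * Complex.Gamma (s + (a + j : ℕ)) := by
    conv_lhs => rw [Finset.range_eq_Ico]
    rw [← Finset.sum_Ico_consecutive _ (Nat.zero_le a) (by omega)]
    congr 1
    · rw [← Finset.range_eq_Ico]
      refine Finset.sum_congr rfl fun m hm => ?_
      have hma : m < a := Finset.mem_range.mp hm
      simp [hb, hma, Nat.not_le.mpr hma]
    · rw [Finset.sum_Ico_eq_sum_range]
      have : a + n0 + 1 - a = n0 + 1 := by omega
      rw [this]
      refine Finset.sum_congr rfl fun j _ => ?_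
      simp [hb, Nat.le_add_right, Nat.not_lt.mpr (Nat.le_add_right a j),
        Nat.add_sub_cancel_left]
  have hsplit2 : (f : ℂ) * ∑ j ∈ Finset.range (n0 + 1),
      ((c j / f : ℝ) : ℂ) * Complex.Gamma (s + (a + j : ℕ)) =
      ∑ j ∈ Finset.range (n0 + 1), ((c j : ℝ) : ℂ) * Complex.Gamma (s + (a + j : ℕ)) := by
    rw [Finset.mul_sum]
    refine Finset.sum_congr rfl fun j _ => ?_
    have hfc : (f : ℂ) ≠ 0 := by exact_mod_cast hfne
    push_cast
    field_simp
  have hsum1 : ∀ m ∈ Finset.range a, ((1 / m.factorial : ℝ) : ℂ) * Complex.Gamma (s + m)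
      = ((m.factorial : ℂ))⁻¹ * Complex.Gamma (s + m) := fun m _ => by push_cast; ring
  rw [hΓ, div_eq_iff (mul_ne_zero (by exact_mod_cast hfne) hs0), hsplit,
    Finset.sum_congr rfl hsum1, hG]
  linear_combination hsum + s * (hc s hs) - s * hsplit2

section assembly
variable (n : ℕ) (b : ℕ → ℝ)

noncomputable def gfun : ℝ → ℂ :=
  fun u => ∑ m ∈ Finset.range (n+1), (b m : ℂ) * ((u : ℂ) ^ m * Real.exp (-u))

theorem gfun_smul (s : ℂ) (t : ℝ) :
    (t : ℂ) ^ (s - 1) • gfun n b t =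
      ∑ m ∈ Finset.range (n+1), (b m : ℂ) *
        ((t : ℂ) ^ (s - 1) • ((t : ℂ) ^ m * Real.exp (-t))) := by
  rw [gfun, Finset.smul_sum]
  exact Finset.sum_congr rfl fun m _ => by rw [smul_eq_mul, smul_eq_mul]; ring

theorem gfun_conv {s : ℂ} (hs : 0 < s.re) : MellinConvergent (gfun n b) s := by
  have h : IntegrableOn (fun t : ℝ => ∑ m ∈ Finset.range (n+1), (b m : ℂ) *
      ((t : ℂ) ^ (s - 1) • ((t : ℂ) ^ m * Real.exp (-t)))) (Ioi 0) :=
    integrable_finset_sum _ fun m _ => ((mellin_monomial_conv m hs).const_mul _)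
  exact h.congr_fun (fun t _ => (gfun_smul n b s t).symm) measurableSet_Ioi

theorem mellin_gfun {s : ℂ} (hs : 0 < s.re) :
    mellin (gfun n b) s =
      ∑ m ∈ Finset.range (n+1), (b m : ℂ) * Complex.Gamma (s + m) := by
  rw [mellin]
  rw [setIntegral_congr_fun measurableSet_Ioi fun t (_ : t ∈ Set.Ioi (0:ℝ)) => gfun_smul n b s t]
  rw [integral_finset_sum _ fun m _ => ((mellin_monomial_conv m hs).const_mul _)]
  exact Finset.sum_congr rfl fun m _ => by
    rw [MeasureTheory.integral_const_mul, ← mellin, mellin_monomial m hs]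

theorem gfun_vertical : VerticalIntegrable (mellin (gfun n b)) 2 := by
  have heq : ∀ t : ℝ, mellin (gfun n b) ((2:ℝ) + t * I) =
      ∑ m ∈ Finset.range (n+1), (b m : ℂ) *
        Complex.Gamma (((2 + m : ℝ) : ℂ) + t * I) := by
    intro t
    rw [mellin_gfun n b (s := (2:ℝ) + t * I) (by simp)]
    exact Finset.sum_congr rfl fun m _ => by rw [show ((2:ℝ):ℂ) + t * I + m =
      ((2 + m : ℝ) : ℂ) + t * I by push_cast; ring]
  rw [VerticalIntegrable]
  rw [show (fun t : ℝ => mellin (gfun n b) ((2:ℝ) + t * I)) = fun t : ℝ =>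
      ∑ m ∈ Finset.range (n+1), (b m : ℂ) * Complex.Gamma (((2 + m : ℝ) : ℂ) + t * I)
    from funext heq]
  exact integrable_finset_sum _ fun m _ =>
    (integrable_Gamma_vertical (2 + m) (by linarith [Nat.cast_nonneg (α := ℝ) m])).const_mul _

theorem gfun_continuous : Continuous (gfun n b) := by
  refine continuous_finset_sum _ fun m _ => Continuous.mul continuous_const ?_
  exact (Continuous.pow (Complex.continuous_ofReal) m).mul
    (Complex.continuous_ofReal.comp (Real.continuous_exp.comp continuous_neg))

theorem gfun_inv {y : ℝ} (hy : 0 < y) : mellinInv 2 (mellin (gfun n b)) y = gfun n b y :=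
  mellinInv_mellin_eq 2 (gfun n b) hy (gfun_conv n b (by norm_num)) (gfun_vertical n b)
    (gfun_continuous n b).continuousAt

end assembly

theorem sum_estimate (n : ℕ) (b : ℕ → ℝ) (hb0 : b 0 = 1) {y : ℝ} (hy : 0 < y) (hy1 : y ≤ 1) :
    |∑ m ∈ Finset.range (n+1), b m * (y ^ m * Real.exp (-y)) - 1| ≤
      (1 + ∑ m ∈ Finset.range (n+1), |b m|) * y := by
  rw [Finset.sum_range_succ']
  have hexp1 : Real.exp (-y) ≤ 1 := Real.exp_le_one_iff.mpr (by linarith)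
  have hexp0 : 0 ≤ Real.exp (-y) := Real.exp_nonneg _
  have h0' : b 0 * (y ^ 0 * Real.exp (-y)) = Real.exp (-y) := by rw [hb0]; ring
  rw [h0']
  set S := ∑ i ∈ Finset.range n, b (i + 1) * (y ^ (i + 1) * Real.exp (-y)) with hS
  have h1 : |Real.exp (-y) - 1| ≤ y := by
    rw [abs_of_nonpos (by linarith)]
    have := Real.add_one_le_exp (-y)
    linarith
  have h2 : |S| ≤ (∑ i ∈ Finset.range n, |b (i + 1)|) * y := by
    refine (Finset.abs_sum_le_sum_abs _ _).trans ?_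
    rw [Finset.sum_mul]
    refine Finset.sum_le_sum fun i _ => ?_
    rw [abs_mul]
    have hyp : |y ^ (i + 1) * Real.exp (-y)| ≤ y := by
      rw [_root_.abs_of_nonneg (by positivity)]
      have hpow : y ^ (i + 1) ≤ y ^ 1 := pow_le_pow_of_le_one (le_of_lt hy) hy1 (by omega)
      nlinarith [pow_nonneg (le_of_lt hy) (i+1)]
    exact mul_le_mul_of_nonneg_left hyp (abs_nonneg _)
  have h3 : ∑ i ∈ Finset.range n, |b (i + 1)| ≤ ∑ m ∈ Finset.range (n+1), |b m| := by
    rw [Finset.sum_range_succ' (fun m => |b m|)]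
    have := abs_nonneg (b 0)
    linarith
  have habs : |S + Real.exp (-y) - 1| ≤ |S| + |Real.exp (-y) - 1| := by
    have he : S + Real.exp (-y) - 1 = S + (Real.exp (-y) - 1) := by ring
    rw [he]
    exact abs_add_le _ _
  nlinarith

/-- `T(y) = 1 + O_k(y)` as `y → 0`. -/
theorem stmt_8 (k : ℕ) (hk : 2 ≤ k) (hke : Even k) (G : Polynomial ℝ)
    (hdeg : 2 ≤ G.natDegree) (heven : ∀ x : ℝ, G.eval (-x) = G.eval x)
    (h0 : G.eval 0 = 1) (h1 : G.eval (-1) = 0) (h2 : G.eval (-2) = 0) :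
    ∃ C : ℝ, 0 < C ∧ ∀ y : ℝ, 0 < y → y ≤ 1 →
      ‖Tint k G y - 1‖ ≤ C * y := by
  obtain ⟨r, hr⟩ := hke
  have ha : 1 ≤ r := by omega
  have hk2 : (k : ℂ) / 2 = (r : ℂ) := by
    rw [hr]; push_cast; ring
  obtain ⟨n, b, hb0, hid⟩ := master r ha G h0
  have hsum_nonneg : 0 ≤ ∑ m ∈ Finset.range (n+1), |b m| :=
    Finset.sum_nonneg fun _ _ => abs_nonneg _
  refine ⟨1 + ∑ m ∈ Finset.range (n+1), |b m|, by linarith, fun y hy hy1 => ?_⟩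
  have hint : ∀ t : ℝ,
      Complex.Gamma ((2 + (t : ℂ) * Complex.I) + (k : ℂ) / 2) / Complex.Gamma ((k : ℂ) / 2) *
        Polynomial.aeval (2 + (t : ℂ) * Complex.I) G *
        (y : ℂ) ^ (-(2 + (t : ℂ) * Complex.I)) / (2 + (t : ℂ) * Complex.I) =
      (y : ℂ) ^ (-(((2:ℝ):ℂ) + (t : ℂ) * Complex.I)) •
        mellin (gfun n b) (((2:ℝ):ℂ) + (t : ℂ) * Complex.I) := by
    intro t
    have h2c : ((2:ℝ):ℂ) = (2:ℂ) := by norm_num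
    rw [h2c, smul_eq_mul]
    have hre : (0:ℝ) < ((2:ℂ) + (t : ℂ) * Complex.I).re := by simp
    rw [mellin_gfun n b hre, ← hid _ hre, hk2]
    have hΓne : Complex.Gamma ((r:ℕ) : ℂ) ≠ 0 := by
      have h1r : ((r : ℕ) : ℂ) = ((r - 1 : ℕ) : ℂ) + 1 := by
        have : r - 1 + 1 = r := by omega
        rw [← this]; push_cast; ring
      rw [h1r, Complex.Gamma_nat_eq_factorial]
      exact_mod_cast Nat.cast_ne_zero.mpr (Nat.factorial_ne_zero _)
    have hsne : (2 : ℂ) + (t : ℂ) * Complex.I ≠ 0 := by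
      intro h
      have := congrArg Complex.re h
      simp at this
    field_simp
  have hT : Tint k G y = mellinInv 2 (mellin (gfun n b)) y := by
    rw [Tint, mellinInv, Complex.real_smul]
    congr 1
    · push_cast; norm_num
    · exact integral_congr_ae (Filter.Eventually.of_forall hint)
  rw [hT, gfun_inv n b hy]
  have hgr : gfun n b y = ((∑ m ∈ Finset.range (n+1), b m * (y ^ m * Real.exp (-y)) : ℝ) : ℂ) := by
    rw [gfun]; norm_cast
  rw [hgr]
  have hcast : ((((∑ m ∈ Finset.range (n+1), b m * (y ^ m * Real.exp (-y)) : ℝ)) : ℂ) - 1) =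
      (((∑ m ∈ Finset.range (n+1), b m * (y ^ m * Real.exp (-y)) - 1 : ℝ)) : ℂ) := by
    push_cast
    ring
  rw [hcast]
  rw [Complex.norm_real, Real.norm_eq_abs]
  exact sum_estimate n b hb0 hy hy1
end
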